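/- arXiv:2503.17961 — 4 statements merged into one kernel-verified Lean document; each statement's English description precedes it below -/
import Mathlib

section
/- Let V ⊆ ℝ^d be a measurable set of finite Lebesgue measure, let δ > 0, and let f : ℝ^d × ℝ → ℝ be such that: f is continuous on V × [0, δ]; for each x ∈ V the map r ↦ f(x, r) is differentiable on [0, δ] with jointly measurable partial derivative ∂f/∂r; the function x ↦ f(x, 0) is square-integrable on V with A := ∫_V f(x,0)² dx; and ∂f/∂r is square-integrable on V × (0, δ) with P := ∫_{V×(0,δ)} (∂f/∂r)². Then f is square-integrable on V × (0, δ) (with respect to the product of the Lebesgue measures) and ∫_{V×(0,δ)} f² ≤ δ·A + (4/3)·δ^{3/2}·√A·√P + (δ²/2)·P. -/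
open MeasureTheory Set

lemma cs_integral {α : Type*} [MeasurableSpace α] {μ : Measure α} {u v : α → ℝ}
    (hu : AEStronglyMeasurable u μ) (hv : AEStronglyMeasurable v μ)
    (hunn : 0 ≤ᵐ[μ] u) (hvnn : 0 ≤ᵐ[μ] v)
    (hu2 : Integrable (fun a => u a ^ 2) μ) (hv2 : Integrable (fun a => v a ^ 2) μ) :
    ∫ a, u a * v a ∂μ ≤ Real.sqrt (∫ a, u a ^ 2 ∂μ) * Real.sqrt (∫ a, v a ^ 2 ∂μ) := by
  have hpq : Real.HolderConjugate 2 2 := (Real.holderConjugate_iff_eq_conjExponent one_lt_two).2 (by norm_num)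
  have h2 : (ENNReal.ofReal (2:ℝ)) = 2 := by norm_num
  have hu' : MemLp u (ENNReal.ofReal (2:ℝ)) μ := by
    rw [h2]; exact (memLp_two_iff_integrable_sq hu).2 hu2
  have hv' : MemLp v (ENNReal.ofReal (2:ℝ)) μ := by
    rw [h2]; exact (memLp_two_iff_integrable_sq hv).2 hv2
  have key := integral_mul_le_Lp_mul_Lq_of_nonneg hpq hunn hvnn hu' hv'
  have e1 : ∀ w : α → ℝ, (∫ a, w a ^ (2:ℝ) ∂μ) = ∫ a, w a ^ (2:ℕ) ∂μ := by
    intro w; congr 1; funext a; rw [← Real.rpow_natCast (w a) 2]; norm_num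
  rw [e1, e1] at key
  calc ∫ a, u a * v a ∂μ ≤ (∫ a, u a ^ 2 ∂μ) ^ ((1:ℝ)/2) * (∫ a, v a ^ 2 ∂μ) ^ ((1:ℝ)/2) := key
    _ = _ := by rw [← Real.sqrt_eq_rpow, ← Real.sqrt_eq_rpow]

set_option maxHeartbeats 1000000 in
/-- The tubular-neighborhood estimate (3.7)/(3.14) in Step 5 of the proof of Lemma 3.1:
for `f` continuous on `V × [0,δ]` with partial derivative `∂f/∂r = f'` on `[0,δ]`,
square-integrable boundary values `f(·,0)` on `V` and square-integrable `f'` on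
`V × (0,δ)`, the function `f` is square-integrable on `V × (0,δ)` and
`∫ f² ≤ δ·A + (4/3)·δ^{3/2}·√A·√P + (δ²/2)·P`, where `A = ∫_V f(·,0)²` and
`P = ∫_{V×(0,δ)} f'²`. -/
theorem collar_sq_integral_bound
    (d : ℕ) (V : Set (EuclideanSpace ℝ (Fin d))) (hV : MeasurableSet V)
    (hVfin : volume V < ⊤) (δ : ℝ) (hδ : 0 < δ)
    (f f' : EuclideanSpace ℝ (Fin d) × ℝ → ℝ)
    (hfc : ContinuousOn f (V ×ˢ Icc 0 δ))
    (hderiv : ∀ x ∈ V, ∀ r ∈ Icc (0:ℝ) δ,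
      HasDerivWithinAt (fun s => f (x, s)) (f' (x, r)) (Icc 0 δ) r)
    (hf'meas : Measurable f')
    (hA : Integrable (fun x => (f (x, 0)) ^ 2) (volume.restrict V))
    (hP : Integrable (fun p => (f' p) ^ 2)
      ((volume.restrict V).prod (volume.restrict (Ioo 0 δ)))) :
    Integrable (fun p => (f p) ^ 2)
      ((volume.restrict V).prod (volume.restrict (Ioo 0 δ))) ∧
    (∫ p, (f p) ^ 2 ∂((volume.restrict V).prod (volume.restrict (Ioo 0 δ)))) ≤
      δ * (∫ x in V, (f (x, 0)) ^ 2)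
      + (4 / 3) * δ ^ ((3:ℝ) / 2) * Real.sqrt (∫ x in V, (f (x, 0)) ^ 2)
          * Real.sqrt (∫ p, (f' p) ^ 2
              ∂((volume.restrict V).prod (volume.restrict (Ioo 0 δ))))
      + (δ ^ 2 / 2) * (∫ p, (f' p) ^ 2
          ∂((volume.restrict V).prod (volume.restrict (Ioo 0 δ)))) := by
  set μ : Measure (EuclideanSpace ℝ (Fin d)) := volume.restrict V with hμdef
  set ν : Measure ℝ := volume.restrict (Ioo 0 δ) with hνdef
  haveI : IsFiniteMeasure μ := ⟨by
    rw [hμdef, Measure.restrict_apply_univ]; exact hVfin⟩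
  haveI : IsFiniteMeasure ν := ⟨by
    rw [hνdef, Measure.restrict_apply_univ, Real.volume_Ioo]
    exact ENNReal.ofReal_lt_top⟩
  set G : EuclideanSpace ℝ (Fin d) → ℝ := fun x => ∫ s, (f' (x, s)) ^ 2 ∂ν with hGdef
  have hGnn : ∀ x, 0 ≤ G x := fun x => integral_nonneg fun s => sq_nonneg _
  have hGsm : StronglyMeasurable G :=
    (hf'meas.pow_const 2).stronglyMeasurable.integral_prod_right'
  have hGint : Integrable G μ := hP.integral_prod_left
  have hGP : ∫ x, G x ∂μ = ∫ p, (f' p) ^ 2 ∂(μ.prod ν) := (integral_prod _ hP).symm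
  have hIntAE : ∀ᵐ x ∂μ, Integrable (fun s => (f' (x, s)) ^ 2) ν := hP.prod_right_ae
  -- boundary function measurability
  have hf0c : ContinuousOn (fun x => f (x, 0)) V := by
    apply hfc.comp (Continuous.continuousOn (by continuity))
    exact fun x hx => ⟨hx, le_refl (0:ℝ), hδ.le⟩
  have hf0m : AEStronglyMeasurable (fun x => f (x, 0)) μ :=
    (hf0c.aemeasurable hV).aestronglyMeasurable
  -- the key pointwise estimate
  have key : ∀ᵐ x ∂μ, ∀ r ∈ Ioo (0:ℝ) δ,
      (f (x, r)) ^ 2 ≤ (f (x, 0)) ^ 2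
        + (2 * (|f (x, 0)| * Real.sqrt (G x))) * Real.sqrt r + G x * r := by
    filter_upwards [hIntAE, ae_restrict_mem hV] with x hx hxV
    intro r hr
    obtain ⟨hr0, hrδ⟩ := hr
    have hsq : IntegrableOn (fun s => (f' (x, s)) ^ 2) (Ioo 0 δ) volume := hx
    have hf'm : Measurable (fun s : ℝ => f' (x, s)) := hf'meas.comp measurable_prodMk_left
    have habs : IntegrableOn (fun s => f' (x, s)) (Ioo 0 δ) volume := by
      refine Integrable.mono' ((integrable_const (1:ℝ)).add hsq)
        hf'm.aestronglyMeasurable ?_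
      filter_upwards with s
      simp only [Pi.add_apply, Real.norm_eq_abs]
      nlinarith [sq_nonneg (|f' (x, s)| - 1), sq_abs (f' (x, s)), abs_nonneg (f' (x, s))]
    have hmono : Ioc (0:ℝ) r ⊆ Ioo 0 δ := fun s hs => ⟨hs.1, lt_of_le_of_lt hs.2 hrδ⟩
    have hcont : ContinuousOn (fun s => f (x, s)) (Icc 0 δ) := by
      apply hfc.comp (Continuous.continuousOn (by continuity))
      exact fun s hs => ⟨hxV, hs⟩
    have hftc : ∫ s in (0:ℝ)..r, f' (x, s) = f (x, r) - f (x, 0) := by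
      apply intervalIntegral.integral_eq_sub_of_hasDeriv_right_of_le hr0.le
        (hcont.mono (Icc_subset_Icc le_rfl hrδ.le))
      · intro s hs
        have hsδ : s ∈ Ioo (0:ℝ) δ := ⟨hs.1, lt_trans hs.2 hrδ⟩
        have hd := hderiv x hxV s ⟨hsδ.1.le, hsδ.2.le⟩
        exact ((hd.hasDerivAt (Icc_mem_nhds hsδ.1 hsδ.2)).hasDerivWithinAt)
      · rw [intervalIntegrable_iff_integrableOn_Ioc_of_le hr0.le]
        exact habs.mono_set hmono
    -- Cauchy-Schwarz on (0, r]
    have hIocInt : IntegrableOn (fun s => f' (x, s)) (Ioc 0 r) volume := habs.mono_set hmono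
    have hIocSq : IntegrableOn (fun s => (f' (x, s)) ^ 2) (Ioc 0 r) volume := hsq.mono_set hmono
    have hCS : ∫ s in Ioc (0:ℝ) r, |f' (x, s)|
        ≤ Real.sqrt (G x) * Real.sqrt r := by
      have h1 : ∫ s in Ioc (0:ℝ) r, |f' (x, s)| = ∫ s in Ioc (0:ℝ) r, |f' (x, s)| * 1 := by
        simp only [mul_one]
      rw [h1]
      have h2 := cs_integral (μ := volume.restrict (Ioc (0:ℝ) r))
        (u := fun s => |f' (x, s)|) (v := fun _ => (1:ℝ))
        hf'm.abs.aestronglyMeasurable aestronglyMeasurable_const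
        (Filter.Eventually.of_forall fun s => abs_nonneg _)
        (Filter.Eventually.of_forall fun s => zero_le_one)
        (by simp only [sq_abs]; exact hIocSq) (by simp)
      refine h2.trans ?_
      have e2 : ∫ s in Ioc (0:ℝ) r, |f' (x, s)| ^ 2 = ∫ s in Ioc (0:ℝ) r, (f' (x, s)) ^ 2 := by
        congr 1; funext s; rw [sq_abs]
      have e3 : (∫ s in Ioc (0:ℝ) r, ((1:ℝ)) ^ 2) = r := by
        simp [Real.volume_Ioc, ENNReal.toReal_ofReal hr0.le]
        exact hr0.le
      rw [e2, e3]
      have hGle : ∫ s in Ioc (0:ℝ) r, (f' (x, s)) ^ 2 ≤ G x :=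
        setIntegral_mono_set hsq (Filter.Eventually.of_forall fun s => sq_nonneg _)
          (HasSubset.Subset.eventuallyLE hmono)
      exact mul_le_mul_of_nonneg_right (Real.sqrt_le_sqrt hGle) (Real.sqrt_nonneg _)
    have hIbound : |∫ s in (0:ℝ)..r, f' (x, s)| ≤ Real.sqrt (G x) * Real.sqrt r := by
      rw [intervalIntegral.integral_of_le hr0.le]
      refine le_trans ?_ hCS
      simpa [Real.norm_eq_abs] using
        norm_integral_le_integral_norm (μ := volume.restrict (Ioc (0:ℝ) r))
          (f := fun s => f' (x, s))
    have habsb : |f (x, r)| ≤ |f (x, 0)| + Real.sqrt (G x) * Real.sqrt r := by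
      have : f (x, r) = f (x, 0) + ∫ s in (0:ℝ)..r, f' (x, s) := by rw [hftc]; ring
      rw [this]
      exact (abs_add_le _ _).trans (by gcongr)
    have hsqb : (f (x, r)) ^ 2 ≤ (|f (x, 0)| + Real.sqrt (G x) * Real.sqrt r) ^ 2 := by
      rw [← sq_abs (f (x, r))]
      exact pow_le_pow_left₀ (abs_nonneg _) habsb 2
    refine hsqb.trans (le_of_eq ?_)
    have e4 : Real.sqrt (G x) ^ 2 = G x := Real.sq_sqrt (hGnn x)
    have e5 : Real.sqrt r ^ 2 = r := Real.sq_sqrt hr0.le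
    have e6 : |f (x, 0)| ^ 2 = (f (x, 0)) ^ 2 := sq_abs _
    nlinarith [e4, e5, e6]
  -- the dominating function
  set B : EuclideanSpace ℝ (Fin d) × ℝ → ℝ := fun z =>
    (f (z.1, 0)) ^ 2 * 1 + (2 * (|f (z.1, 0)| * Real.sqrt (G z.1))) * Real.sqrt z.2
      + G z.1 * z.2 with hBdef
  -- integrability of the middle factor via AM-GM
  have hmid : Integrable (fun x => 2 * (|f (x, 0)| * Real.sqrt (G x))) μ := by
    refine Integrable.const_mul ?_ 2
    refine Integrable.mono' (hA.add hGint)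
      ((continuous_abs.comp_aestronglyMeasurable hf0m).mul (Real.continuous_sqrt.comp_stronglyMeasurable hGsm).aestronglyMeasurable) ?_
    filter_upwards with x
    simp only [Pi.add_apply]
    have h1 : 0 ≤ |f (x, 0)| * Real.sqrt (G x) :=
      mul_nonneg (abs_nonneg _) (Real.sqrt_nonneg _)
    rw [Real.norm_eq_abs, abs_of_nonneg h1]
    have e4 : Real.sqrt (G x) ^ 2 = G x := Real.sq_sqrt (hGnn x)
    nlinarith [sq_nonneg (|f (x, 0)| - Real.sqrt (G x)), sq_abs (f (x, 0)), hGnn x]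
  have hsqrtν : Integrable (fun r : ℝ => Real.sqrt r) ν :=
    (Real.continuous_sqrt.integrableOn_Icc.mono_set Ioo_subset_Icc_self)
  have hidν : Integrable (fun r : ℝ => r) ν :=
    (continuous_id.integrableOn_Icc.mono_set Ioo_subset_Icc_self)
  have hB1 : Integrable (fun z : EuclideanSpace ℝ (Fin d) × ℝ => (f (z.1, 0)) ^ 2 * 1)
      (μ.prod ν) := hA.mul_prod (integrable_const 1)
  have hB2 : Integrable (fun z : EuclideanSpace ℝ (Fin d) × ℝ =>
      (2 * (|f (z.1, 0)| * Real.sqrt (G z.1))) * Real.sqrt z.2) (μ.prod ν) :=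
    hmid.mul_prod hsqrtν
  have hB3 : Integrable (fun z : EuclideanSpace ℝ (Fin d) × ℝ => G z.1 * z.2) (μ.prod ν) :=
    hGint.mul_prod hidν
  have hBint : Integrable B (μ.prod ν) := (hB1.add hB2).add hB3
  -- a.e. bound on the product
  have haeB : ∀ᵐ z ∂(μ.prod ν), (f z) ^ 2 ≤ B z := by
    have h1 : ∀ᵐ z ∂(μ.prod ν), z.2 ∈ Ioo (0:ℝ) δ :=
      (Measure.quasiMeasurePreserving_snd (μ := μ) (ν := ν)).ae
        (ae_restrict_mem measurableSet_Ioo)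
    have h2 : ∀ᵐ z : EuclideanSpace ℝ (Fin d) × ℝ ∂(μ.prod ν), ∀ r ∈ Ioo (0:ℝ) δ,
        (f (z.1, r)) ^ 2 ≤ (f (z.1, 0)) ^ 2
          + (2 * (|f (z.1, 0)| * Real.sqrt (G z.1))) * Real.sqrt r + G z.1 * r :=
      (Measure.quasiMeasurePreserving_fst (μ := μ) (ν := ν)).ae key
    filter_upwards [h1, h2] with z hz1 hz2
    calc (f z) ^ 2 = (f (z.1, z.2)) ^ 2 := by rw [Prod.mk.eta]
      _ ≤ (f (z.1, 0)) ^ 2 + (2 * (|f (z.1, 0)| * Real.sqrt (G z.1))) * Real.sqrt z.2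
          + G z.1 * z.2 := hz2 z.2 hz1
      _ = B z := by simp only [hBdef]; ring
  -- measurability of f^2 on the product
  have hf2m : AEStronglyMeasurable (fun z => (f z) ^ 2) (μ.prod ν) := by
    rw [hμdef, hνdef, Measure.prod_restrict]
    have hcm : ContinuousOn f (V ×ˢ Ioo 0 δ) :=
      hfc.mono (prod_mono subset_rfl Ioo_subset_Icc_self)
    exact (((hcm.aemeasurable (hV.prod measurableSet_Ioo)).pow_const 2).aestronglyMeasurable)
  have hf2int : Integrable (fun z => (f z) ^ 2) (μ.prod ν) := by
    refine Integrable.mono' hBint hf2m ?_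
    filter_upwards [haeB] with z hz
    rw [Real.norm_eq_abs, abs_of_nonneg (sq_nonneg _)]
    exact hz
  refine ⟨hf2int, ?_⟩
  -- now the integral estimate
  have hle : ∫ z, (f z) ^ 2 ∂(μ.prod ν) ≤ ∫ z, B z ∂(μ.prod ν) :=
    integral_mono_ae hf2int hBint haeB
  have hsplit : ∫ z, B z ∂(μ.prod ν)
      = (∫ x, (f (x, 0)) ^ 2 ∂μ) * (∫ r, (1:ℝ) ∂ν)
      + (∫ x, 2 * (|f (x, 0)| * Real.sqrt (G x)) ∂μ) * (∫ r, Real.sqrt r ∂ν)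
      + (∫ x, G x ∂μ) * (∫ r, r ∂ν) := by
    have s1 : ∫ z, B z ∂(μ.prod ν)
        = (∫ z : EuclideanSpace ℝ (Fin d) × ℝ,
            ((f (z.1, 0)) ^ 2 * 1
              + (2 * (|f (z.1, 0)| * Real.sqrt (G z.1))) * Real.sqrt z.2) ∂(μ.prod ν))
          + ∫ z : EuclideanSpace ℝ (Fin d) × ℝ, G z.1 * z.2 ∂(μ.prod ν) :=
      integral_add (hB1.add hB2) hB3
    have s2 : (∫ z : EuclideanSpace ℝ (Fin d) × ℝ,
            ((f (z.1, 0)) ^ 2 * 1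
              + (2 * (|f (z.1, 0)| * Real.sqrt (G z.1))) * Real.sqrt z.2) ∂(μ.prod ν))
        = (∫ z : EuclideanSpace ℝ (Fin d) × ℝ, (f (z.1, 0)) ^ 2 * 1 ∂(μ.prod ν))
          + ∫ z : EuclideanSpace ℝ (Fin d) × ℝ,
              (2 * (|f (z.1, 0)| * Real.sqrt (G z.1))) * Real.sqrt z.2 ∂(μ.prod ν) :=
      integral_add hB1 hB2
    have p1 : ∫ z : EuclideanSpace ℝ (Fin d) × ℝ, (f (z.1, 0)) ^ 2 * 1 ∂(μ.prod ν)
        = (∫ x, (f (x, 0)) ^ 2 ∂μ) * ∫ r, (1:ℝ) ∂ν :=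
      integral_prod_mul (fun x => (f (x, 0)) ^ 2) (fun _ => (1:ℝ))
    have p2 : ∫ z : EuclideanSpace ℝ (Fin d) × ℝ,
          (2 * (|f (z.1, 0)| * Real.sqrt (G z.1))) * Real.sqrt z.2 ∂(μ.prod ν)
        = (∫ x, 2 * (|f (x, 0)| * Real.sqrt (G x)) ∂μ) * ∫ r, Real.sqrt r ∂ν :=
      integral_prod_mul (fun x => 2 * (|f (x, 0)| * Real.sqrt (G x))) (fun r => Real.sqrt r)
    have p3 : ∫ z : EuclideanSpace ℝ (Fin d) × ℝ, G z.1 * z.2 ∂(μ.prod ν)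
        = (∫ x, G x ∂μ) * ∫ r, r ∂ν :=
      integral_prod_mul G (fun r => r)
    rw [s1, s2, p1, p2, p3]
  -- compute the three r-integrals
  have hν1 : (∫ r, (1:ℝ) ∂ν) = δ := by
    simp [hνdef, Real.volume_Ioo, ENNReal.toReal_ofReal hδ.le]
    exact hδ.le
  have hνsqrt : (∫ r, Real.sqrt r ∂ν) = (2/3) * δ ^ ((3:ℝ)/2) := by
    rw [hνdef]
    rw [← integral_Ioc_eq_integral_Ioo, ← intervalIntegral.integral_of_le hδ.le]
    have : ∀ s ∈ uIcc (0:ℝ) δ, Real.sqrt s = s ^ ((1:ℝ)/2) := by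
      intro s hs
      rw [Real.sqrt_eq_rpow]
    rw [intervalIntegral.integral_congr this, integral_rpow (Or.inl (by norm_num))]
    rw [Real.zero_rpow (by norm_num)]
    norm_num
    ring
  have hνid : (∫ r, r ∂ν) = δ ^ 2 / 2 := by
    rw [hνdef]
    rw [← integral_Ioc_eq_integral_Ioo, ← intervalIntegral.integral_of_le hδ.le]
    rw [integral_id]; ring
  -- CS in x
  have hAnn : 0 ≤ ∫ x, (f (x, 0)) ^ 2 ∂μ := integral_nonneg fun x => sq_nonneg _
  have hcsx : ∫ x, 2 * (|f (x, 0)| * Real.sqrt (G x)) ∂μ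
      ≤ 2 * (Real.sqrt (∫ x, (f (x, 0)) ^ 2 ∂μ)
          * Real.sqrt (∫ p, (f' p) ^ 2 ∂(μ.prod ν))) := by
    rw [integral_const_mul]
    gcongr 2 * ?_
    have h := cs_integral (μ := μ) (u := fun x => |f (x, 0)|) (v := fun x => Real.sqrt (G x))
      (continuous_abs.comp_aestronglyMeasurable hf0m) (Real.continuous_sqrt.comp_stronglyMeasurable hGsm).aestronglyMeasurable
      (Filter.Eventually.of_forall fun x => abs_nonneg _)
      (Filter.Eventually.of_forall fun x => Real.sqrt_nonneg _)
      (by simpa [sq_abs] using hA) (by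
        have : (fun x => Real.sqrt (G x) ^ 2) = G := by
          funext x; exact Real.sq_sqrt (hGnn x)
        rw [this]; exact hGint)
    refine h.trans (le_of_eq ?_)
    congr 1
    · congr 1; congr 1; funext x; rw [sq_abs]
    · rw [← hGP]; congr 1; congr 1; funext x; rw [Real.sq_sqrt (hGnn x)]
  -- put everything together
  have hPnn : 0 ≤ ∫ p, (f' p) ^ 2 ∂(μ.prod ν) := integral_nonneg fun p => sq_nonneg _
  have hsqrtδnn : (0:ℝ) ≤ (2/3) * δ ^ ((3:ℝ)/2) := by positivity
  calc ∫ z, (f z) ^ 2 ∂(μ.prod ν) ≤ ∫ z, B z ∂(μ.prod ν) := hle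
    _ = (∫ x, (f (x, 0)) ^ 2 ∂μ) * δ
        + (∫ x, 2 * (|f (x, 0)| * Real.sqrt (G x)) ∂μ) * ((2/3) * δ ^ ((3:ℝ)/2))
        + (∫ p, (f' p) ^ 2 ∂(μ.prod ν)) * (δ ^ 2 / 2) := by
        rw [hsplit, hν1, hνsqrt, hνid, hGP]
    _ ≤ (∫ x, (f (x, 0)) ^ 2 ∂μ) * δ
        + (2 * (Real.sqrt (∫ x, (f (x, 0)) ^ 2 ∂μ)
            * Real.sqrt (∫ p, (f' p) ^ 2 ∂(μ.prod ν)))) * ((2/3) * δ ^ ((3:ℝ)/2))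
        + (∫ p, (f' p) ^ 2 ∂(μ.prod ν)) * (δ ^ 2 / 2) := by
        gcongr
    _ = δ * (∫ x, (f (x, 0)) ^ 2 ∂μ)
        + (4/3) * δ ^ ((3:ℝ)/2) * Real.sqrt (∫ x, (f (x, 0)) ^ 2 ∂μ)
            * Real.sqrt (∫ p, (f' p) ^ 2 ∂(μ.prod ν))
        + (δ ^ 2 / 2) * (∫ p, (f' p) ^ 2 ∂(μ.prod ν)) := by ring
end

section
/- Let V ⊆ ℝ^d be a measurable set of finite Lebesgue measure, let δ > 0, and let f : ℝ^d × ℝ → ℝ be such that: f is continuous on V × [0, δ]; for each x ∈ V the map r ↦ f(x, r) is differentiable on [0, δ] with jointly measurable partial derivative ∂f/∂r; f is square-integrable on V × (0, δ); and ∂f/∂r is square-integrable on V × (0, δ). Then the boundary trace is controlled by the W^{1,2}-data: ∫_V f(x,0)² dx ≤ (1/δ)·∫_{V×(0,δ)} f² + 2·(∫_{V×(0,δ)} f²)^{1/2}·(∫_{V×(0,δ)} (∂f/∂r)²)^{1/2}. -/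
open MeasureTheory Set

private lemma fiber_trace_bound {δ : ℝ} (hδ : 0 < δ) (g g' : ℝ → ℝ)
    (hg : ContinuousOn g (Icc 0 δ))
    (hder : ∀ r ∈ Icc (0:ℝ) δ, HasDerivWithinAt g (g' r) (Icc 0 δ) r)
    (hint : IntegrableOn (fun s => g s * g' s) (Ioo 0 δ)) :
    g 0 ^ 2 ≤ (1/δ) * (∫ r in Ioo 0 δ, g r ^ 2)
      + 2 * ∫ s in Ioo 0 δ, |g s * g' s| := by
  have habs : IntegrableOn (fun s => |g s * g' s|) (Ioo 0 δ) := hint.abs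
  set I := ∫ s in Ioo 0 δ, |g s * g' s| with hIdef
  have hI0 : 0 ≤ I := setIntegral_nonneg measurableSet_Ioo (fun _ _ => abs_nonneg _)
  have step1 : ∀ r ∈ Ioo (0:ℝ) δ, g 0 ^ 2 ≤ g r ^ 2 + 2 * I := by
    intro r hr
    have hle : (0:ℝ) ≤ r := hr.1.le
    have hsub : Ioc 0 r ⊆ Ioo 0 δ := fun t ht => ⟨ht.1, lt_of_le_of_lt ht.2 hr.2⟩
    have hcont : ContinuousOn (fun s => g s ^ 2) (Icc 0 r) :=
      (hg.mono (Icc_subset_Icc le_rfl hr.2.le)).pow 2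
    have hderiv2 : ∀ t ∈ Ioo (0:ℝ) r, HasDerivAt (fun s => g s ^ 2) (2 * (g t * g' t)) t := by
      intro t ht
      have ht' : t ∈ Ioo (0:ℝ) δ := ⟨ht.1, ht.2.trans hr.2⟩
      have h1 := (hder t (Ioo_subset_Icc_self ht')).hasDerivAt (Icc_mem_nhds ht'.1 ht'.2)
      have h2 := h1.fun_pow 2
      refine h2.congr_deriv ?_
      simp [pow_one]; ring
    have hii : IntervalIntegrable (fun t => 2 * (g t * g' t)) volume 0 r := by
      rw [intervalIntegrable_iff_integrableOn_Ioc_of_le hle]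
      exact (hint.mono_set hsub).const_mul 2
    have hftc := intervalIntegral.integral_eq_sub_of_hasDeriv_right_of_le hle hcont
      (fun t ht => (hderiv2 t ht).hasDerivWithinAt) hii
    have habs2 : |∫ t in (0:ℝ)..r, 2 * (g t * g' t)| ≤ 2 * I := by
      have e1 : (fun t => |2 * (g t * g' t)|) = fun t => 2 * |g t * g' t| := by
        funext t; rw [abs_mul, abs_two]
      calc |∫ t in (0:ℝ)..r, 2 * (g t * g' t)|
          ≤ ∫ t in (0:ℝ)..r, |2 * (g t * g' t)| :=
            intervalIntegral.abs_integral_le_integral_abs hle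
        _ = ∫ t in Ioc 0 r, |2 * (g t * g' t)| := intervalIntegral.integral_of_le hle
        _ ≤ ∫ t in Ioo 0 δ, |2 * (g t * g' t)| := by
            refine setIntegral_mono_set ?_ ?_ hsub.eventuallyLE
            · rw [e1]; exact habs.const_mul 2
            · exact Filter.Eventually.of_forall fun t => abs_nonneg _
        _ = 2 * I := by rw [e1, hIdef, integral_const_mul]
    have h3 : g 0 ^ 2 = g r ^ 2 - ∫ t in (0:ℝ)..r, 2 * (g t * g' t) := by
      rw [hftc]; ring
    rw [h3]
    have := neg_abs_le (∫ t in (0:ℝ)..r, 2 * (g t * g' t))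
    linarith
  have hm : (volume (Ioo (0:ℝ) δ)).toReal = δ := by
    rw [Real.volume_Ioo, sub_zero, ENNReal.toReal_ofReal hδ.le]
  have hg2int : IntegrableOn (fun r => g r ^ 2) (Ioo 0 δ) :=
    ((hg.pow 2).integrableOn_Icc).mono_set Ioo_subset_Icc_self
  have hrhs_int : IntegrableOn (fun r => g r ^ 2 + 2 * I) (Ioo 0 δ) :=
    hg2int.add (integrableOn_const (by rw [Real.volume_Ioo]; exact ENNReal.ofReal_ne_top))
  have hmono := setIntegral_mono_on
    (integrableOn_const (by rw [Real.volume_Ioo]; exact ENNReal.ofReal_ne_top))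
    hrhs_int measurableSet_Ioo step1
  rw [setIntegral_const, smul_eq_mul, measureReal_def, hm] at hmono
  have hsplit : ∫ r in Ioo 0 δ, (g r ^ 2 + 2 * I)
      = (∫ r in Ioo 0 δ, g r ^ 2) + δ * (2 * I) := by
    rw [integral_add hg2int (integrableOn_const
      (by rw [Real.volume_Ioo]; exact ENNReal.ofReal_ne_top)), setIntegral_const,
      smul_eq_mul, measureReal_def, hm]
  rw [hsplit] at hmono
  have h1δ : (0:ℝ) < 1/δ := by positivity
  calc g 0 ^ 2 = (1/δ) * (δ * g 0 ^ 2) := by field_simp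
    _ ≤ (1/δ) * ((∫ r in Ioo 0 δ, g r ^ 2) + δ * (2 * I)) :=
        mul_le_mul_of_nonneg_left hmono h1δ.le
    _ = (1/δ) * (∫ r in Ioo 0 δ, g r ^ 2) + 2 * I := by field_simp

set_option maxHeartbeats 1000000 in
/-- The local boundary (trace) estimate used in Step 2 of the proof of the trace theorem
(Theorem 3.1): for `f` continuous on `V × [0,δ]` with partial derivative `∂f/∂r = f'`,
with `f` and `f'` square-integrable on the collar `V × (0,δ)`, the boundary values satisfy
`∫_V f(·,0)² ≤ (1/δ)·∫ f² + 2·(∫ f²)^{1/2}·(∫ f'²)^{1/2}`. -/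
theorem trace_sq_integral_bound
    (d : ℕ) (V : Set (EuclideanSpace ℝ (Fin d))) (hV : MeasurableSet V)
    (hVfin : volume V < ⊤) (δ : ℝ) (hδ : 0 < δ)
    (f f' : EuclideanSpace ℝ (Fin d) × ℝ → ℝ)
    (hfc : ContinuousOn f (V ×ˢ Icc 0 δ))
    (hderiv : ∀ x ∈ V, ∀ r ∈ Icc (0:ℝ) δ,
      HasDerivWithinAt (fun s => f (x, s)) (f' (x, r)) (Icc 0 δ) r)
    (hf'meas : Measurable f')
    (hf2 : Integrable (fun p => (f p) ^ 2)
      ((volume.restrict V).prod (volume.restrict (Ioo 0 δ))))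
    (hf'2 : Integrable (fun p => (f' p) ^ 2)
      ((volume.restrict V).prod (volume.restrict (Ioo 0 δ)))) :
    (∫ x in V, (f (x, 0)) ^ 2) ≤
      (1 / δ) * (∫ p, (f p) ^ 2
          ∂((volume.restrict V).prod (volume.restrict (Ioo 0 δ))))
      + 2 * Real.sqrt (∫ p, (f p) ^ 2
            ∂((volume.restrict V).prod (volume.restrict (Ioo 0 δ))))
          * Real.sqrt (∫ p, (f' p) ^ 2
            ∂((volume.restrict V).prod (volume.restrict (Ioo 0 δ)))) := by
  set μ := (volume.restrict V).prod (volume.restrict (Ioo (0:ℝ) δ)) with hμ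
  have hμr : μ = (volume.prod volume).restrict (V ×ˢ Ioo (0:ℝ) δ) :=
    Measure.prod_restrict V (Ioo 0 δ)
  have hfcon : ContinuousOn f (V ×ˢ Ioo (0:ℝ) δ) :=
    hfc.mono (prod_mono_right Ioo_subset_Icc_self)
  have hfmeas : AEStronglyMeasurable f μ := by
    rw [hμr]
    exact (hfcon.aemeasurable (hV.prod measurableSet_Ioo)).aestronglyMeasurable
  have hprodint : Integrable (fun p => f p * f' p) μ := by
    refine (hf2.add hf'2).mono (hfmeas.mul hf'meas.aestronglyMeasurable) ?_
    refine Filter.Eventually.of_forall fun p => ?_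
    have h1 : |f p * f' p| ≤ f p ^ 2 + f' p ^ 2 := by
      rw [abs_mul]
      nlinarith [sq_nonneg (|f p| - |f' p|), sq_abs (f p), sq_abs (f' p),
        abs_nonneg (f p), abs_nonneg (f' p)]
    simp only [Pi.add_apply, Real.norm_eq_abs]
    rw [abs_of_nonneg (show (0:ℝ) ≤ f p ^ 2 + f' p ^ 2 by positivity)]
    exact h1
  have habsint : Integrable (fun p => |f p * f' p|) μ := hprodint.abs
  set A := ∫ p, (f p) ^ 2 ∂μ with hA
  set B := ∫ p, (f' p) ^ 2 ∂μ with hB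
  -- Cauchy–Schwarz
  have hCS : (∫ p, |f p * f' p| ∂μ) ≤ Real.sqrt A * Real.sqrt B := by
    have h22 : Real.HolderConjugate 2 2 := Real.holderConjugate_iff.mpr ⟨one_lt_two, by norm_num⟩
    have hfL2 : MemLp f 2 μ := (memLp_two_iff_integrable_sq hfmeas).mpr hf2
    have hf'L2 : MemLp f' 2 μ :=
      (memLp_two_iff_integrable_sq hf'meas.aestronglyMeasurable).mpr hf'2
    have hfa : MemLp (fun p => |f p|) (ENNReal.ofReal 2) μ := by
      have := hfL2.abs
      simpa [Pi.abs_def, ENNReal.ofReal_ofNat] using this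
    have hf'a : MemLp (fun p => |f' p|) (ENNReal.ofReal 2) μ := by
      have := hf'L2.abs
      simpa [Pi.abs_def, ENNReal.ofReal_ofNat] using this
    have key := integral_mul_le_Lp_mul_Lq_of_nonneg h22
      (Filter.Eventually.of_forall fun p => abs_nonneg (f p))
      (Filter.Eventually.of_forall fun p => abs_nonneg (f' p)) hfa hf'a
    have e1 : ∀ g : EuclideanSpace ℝ (Fin d) × ℝ → ℝ,
        (∫ p, |g p| ^ (2:ℝ) ∂μ) = ∫ p, (g p) ^ 2 ∂μ := by
      intro g
      refine integral_congr_ae (Filter.Eventually.of_forall fun p => ?_)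
      show |g p| ^ (2:ℝ) = g p ^ 2
      rw [Real.rpow_two, sq_abs]
    have e2 : ∀ p0 : EuclideanSpace ℝ (Fin d) × ℝ, |f p0 * f' p0| = |f p0| * |f' p0| :=
      fun p0 => abs_mul _ _
    calc (∫ p, |f p * f' p| ∂μ) = ∫ p, |f p| * |f' p| ∂μ := by
          exact integral_congr_ae (Filter.Eventually.of_forall fun p => e2 p)
      _ ≤ (∫ p, |f p| ^ (2:ℝ) ∂μ) ^ (1/(2:ℝ)) * (∫ p, |f' p| ^ (2:ℝ) ∂μ) ^ (1/(2:ℝ)) := key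
      _ = Real.sqrt A * Real.sqrt B := by
          rw [e1 f, e1 f', ← Real.sqrt_eq_rpow, ← Real.sqrt_eq_rpow]
  have hAB : (∫ p, |f p * f' p| ∂μ) ≥ 0 :=
    integral_nonneg fun p => abs_nonneg _
  -- a.e. fiber integrability and pointwise bound
  have hfiber : ∀ᵐ x ∂(volume.restrict V),
      Integrable (fun r => f (x, r) * f' (x, r)) (volume.restrict (Ioo 0 δ)) :=
    hprodint.prod_right_ae
  have hxV : ∀ᵐ x ∂(volume.restrict V), x ∈ V := ae_restrict_mem hV
  have hpt : ∀ᵐ x ∂(volume.restrict V), (f (x, 0)) ^ 2 ≤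
      (1/δ) * (∫ r in Ioo 0 δ, (f (x, r)) ^ 2)
        + 2 * ∫ s in Ioo 0 δ, |f (x, s) * f' (x, s)| := by
    filter_upwards [hfiber, hxV] with x hx1 hx2
    have hgc : ContinuousOn (fun r => f (x, r)) (Icc 0 δ) :=
      hfc.comp (Continuous.continuousOn (by continuity)) (fun r hr => ⟨hx2, hr⟩)
    exact fiber_trace_bound hδ _ _ hgc (hderiv x hx2) hx1
  -- integrate the pointwise bound over V
  have hG1 : Integrable (fun x => ∫ r, (f (x, r)) ^ 2 ∂(volume.restrict (Ioo 0 δ)))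
      (volume.restrict V) := hf2.integral_prod_left
  have hG2 : Integrable (fun x => ∫ r, |f (x, r) * f' (x, r)| ∂(volume.restrict (Ioo 0 δ)))
      (volume.restrict V) := habsint.integral_prod_left
  have hL : (∫ x in V, (f (x, 0)) ^ 2) ≤ ∫ x in V,
      ((1/δ) * (∫ r in Ioo 0 δ, (f (x, r)) ^ 2)
        + 2 * ∫ s in Ioo 0 δ, |f (x, s) * f' (x, s)|) := by
    refine integral_mono_of_nonneg (Filter.Eventually.of_forall fun x => sq_nonneg _) ?_ hpt
    exact (hG1.const_mul (1/δ)).add (hG2.const_mul 2)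
  have hsplit : (∫ x in V, ((1/δ) * (∫ r in Ioo 0 δ, (f (x, r)) ^ 2)
        + 2 * ∫ s in Ioo 0 δ, |f (x, s) * f' (x, s)|))
      = (1/δ) * (∫ x in V, ∫ r in Ioo 0 δ, (f (x, r)) ^ 2)
        + 2 * (∫ x in V, ∫ s in Ioo 0 δ, |f (x, s) * f' (x, s)|) := by
    rw [integral_add (hG1.const_mul (1/δ)) (hG2.const_mul 2),
      integral_const_mul, integral_const_mul]
  have hfub1 : (∫ x in V, ∫ r in Ioo 0 δ, (f (x, r)) ^ 2) = A :=
    (integral_prod _ hf2).symm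
  have hfub2 : (∫ x in V, ∫ s in Ioo 0 δ, |f (x, s) * f' (x, s)|)
      = ∫ p, |f p * f' p| ∂μ := (integral_prod _ habsint).symm
  rw [hsplit, hfub1, hfub2] at hL
  have h2CS : 2 * (∫ p, |f p * f' p| ∂μ) ≤ 2 * (Real.sqrt A * Real.sqrt B) := by
    linarith
  calc (∫ x in V, (f (x, 0)) ^ 2)
      ≤ (1/δ) * A + 2 * (∫ p, |f p * f' p| ∂μ) := hL
    _ ≤ (1/δ) * A + 2 * (Real.sqrt A * Real.sqrt B) := by linarith
    _ = (1/δ) * A + 2 * Real.sqrt A * Real.sqrt B := by ring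
end

section
/- (Left-continuity of min-max eigenvalues along a monotone family with dense union; core of Theorem 4.1.) Let E be a real normed vector space, let b₀ and B be continuous symmetric bilinear forms on E with b₀ positive definite (b₀(u,u) > 0 for u ≠ 0), and assume there is γ ∈ ℝ with B(u,u) ≥ γ·b₀(u,u) for all u ∈ E. For an integer k ≥ 1 and a submodule W of E define λ_k(W) := sInf { S ∈ ℝ | ∃ a submodule V of E with V ≤ W, finrank ℝ V = k, and S = sSup { B(u,u) | u ∈ V, b₀(u,u) = 1 } }. Let t ∈ ℝ and let (H_s)_{s ∈ ℝ} be a family of submodules of E that is monotone (s ≤ s′ implies H_s ≤ H_{s′}) and satisfies the density condition: H_t is contained in the topological closure of ⋃_{s < t} H_s. If H_t contains a submodule of finite rank k, then for every ε > 0 there exists s < t with λ_k(H_s) < λ_k(H_t) + ε. -/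
open Filter Topology

/-- The `k`-th min-max eigenvalue (formula (1.7)) of the bilinear form `B` relative to the
positive form `b₀`, restricted to a subspace `W`: the infimum over `k`-dimensional subspaces
`V ≤ W` of the supremum of `B(u,u)` over the `b₀`-unit sphere of `V`. -/
noncomputable def minmaxEigenvalue {E : Type*} [NormedAddCommGroup E] [NormedSpace ℝ E]
    (b₀ B : E →L[ℝ] E →L[ℝ] ℝ) (k : ℕ) (W : Submodule ℝ E) : ℝ :=
  sInf { S : ℝ | ∃ V : Submodule ℝ E, V ≤ W ∧ Module.finrank ℝ V = k ∧
    S = sSup { r : ℝ | ∃ u : E, u ∈ V ∧ b₀ u u = 1 ∧ r = B u u } }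

namespace MinMaxAux

variable {E : Type*} [NormedAddCommGroup E] [NormedSpace ℝ E]

/-- The set of Rayleigh values over the `b₀`-unit sphere of `V`. -/
def sphSet (b₀ B : E →L[ℝ] E →L[ℝ] ℝ) (V : Submodule ℝ E) : Set ℝ :=
  { r : ℝ | ∃ u : E, u ∈ V ∧ b₀ u u = 1 ∧ r = B u u }

lemma abs_bilin_le (Q : E →L[ℝ] E →L[ℝ] ℝ) (x y : E) : |Q x y| ≤ ‖Q‖ * ‖x‖ * ‖y‖ :=
  Q.le_opNorm₂ x y

lemma quad_diff_le (Q : E →L[ℝ] E →L[ℝ] ℝ) (x y : E) :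
    |Q x x - Q y y| ≤ ‖Q‖ * ‖x‖ * ‖x - y‖ + ‖Q‖ * ‖x - y‖ * ‖y‖ := by
  have h : Q x x - Q y y = Q x (x - y) + Q (x - y) y := by
    simp [map_sub, ContinuousLinearMap.sub_apply]
  rw [h]
  refine (abs_add_le _ _).trans (add_le_add ?_ ?_)
  · simpa [mul_comm] using abs_bilin_le Q x (x - y)
  · exact abs_bilin_le Q (x - y) y

/-- Coercivity of `b₀` on a finite-dimensional subspace. -/
lemma exists_coercive (b₀ : E →L[ℝ] E →L[ℝ] ℝ) (hb₀pos : ∀ u : E, u ≠ 0 → 0 < b₀ u u)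
    (V : Submodule ℝ E) [FiniteDimensional ℝ V] (hV : V ≠ ⊥) :
    ∃ m > 0, ∀ v : V, m * ‖v‖ ^ 2 ≤ b₀ v v := by
  haveI : Nontrivial V := Submodule.nontrivial_iff_ne_bot.mpr hV
  have hcont : Continuous fun v : V => b₀ (v : E) (v : E) := by
    fun_prop
  obtain ⟨x, hx⟩ := exists_norm_eq V (le_of_lt (one_pos))
  have hxmem : x ∈ Metric.sphere (0 : V) 1 := by simpa [mem_sphere_zero_iff_norm] using hx
  obtain ⟨v₀, hv₀mem, hv₀min⟩ := (isCompact_sphere (0 : V) 1).exists_isMinOn ⟨x, hxmem⟩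
    hcont.continuousOn
  have hv₀norm : ‖v₀‖ = 1 := by simpa [mem_sphere_zero_iff_norm] using hv₀mem
  have hv₀ne : (v₀ : E) ≠ 0 := by
    intro h
    have : v₀ = 0 := by exact_mod_cast Subtype.ext h
    simp [this] at hv₀norm
  refine ⟨b₀ v₀ v₀, hb₀pos _ hv₀ne, ?_⟩
  intro v
  rcases eq_or_ne v 0 with rfl | hv
  · simp
  · have hnv : (0:ℝ) < ‖v‖ := norm_pos_iff.mpr hv
    set u : V := ‖v‖⁻¹ • v with hu
    have hunorm : ‖u‖ = 1 := by
      rw [hu, norm_smul]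
      simp only [abs_of_pos (inv_pos.mpr hnv), Real.norm_eq_abs]
      exact inv_mul_cancel₀ hnv.ne'
    have humem : u ∈ Metric.sphere (0 : V) 1 := by
      simpa [mem_sphere_zero_iff_norm] using hunorm
    have hle : b₀ (v₀ : E) (v₀ : E) ≤ b₀ (u : E) (u : E) := hv₀min humem
    have hval : b₀ (u : E) (u : E) = ‖v‖⁻¹ * (‖v‖⁻¹ * b₀ (v : E) (v : E)) := by
      simp [hu, map_smul, smul_eq_mul]
    rw [hval] at hle
    have h2 : (0:ℝ) < ‖v‖ ^ 2 := by positivity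
    have h3 := mul_le_mul_of_nonneg_right hle h2.le
    have h4 : ‖v‖⁻¹ * (‖v‖⁻¹ * b₀ (v : E) (v : E)) * ‖v‖ ^ 2 = b₀ (v : E) (v : E) := by
      rw [sq]
      field_simp
    rw [h4] at h3
    exact h3

/-- Existence of a `b₀`-unit vector in a nontrivial subspace. -/
lemma exists_unit (b₀ : E →L[ℝ] E →L[ℝ] ℝ) (hb₀pos : ∀ u : E, u ≠ 0 → 0 < b₀ u u)
    (V : Submodule ℝ E) (hV : V ≠ ⊥) :
    ∃ u : E, u ∈ V ∧ b₀ u u = 1 := by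
  obtain ⟨x, hxV, hx0⟩ := Submodule.exists_mem_ne_zero_of_ne_bot hV
  have hc : (0:ℝ) < b₀ x x := hb₀pos x hx0
  refine ⟨(Real.sqrt (b₀ x x))⁻¹ • x, V.smul_mem _ hxV, ?_⟩
  have hs : Real.sqrt (b₀ x x) * Real.sqrt (b₀ x x) = b₀ x x := Real.mul_self_sqrt hc.le
  have hsne : Real.sqrt (b₀ x x) ≠ 0 := by positivity
  simp only [map_smul, ContinuousLinearMap.smul_apply, smul_eq_mul]
  field_simp
  exact (Real.sq_sqrt hc.le).symm

/-- Scaling: for `v ∈ V` with `b₀ v v > 0`, `B v v ≤ sSup (sphSet V) * b₀ v v`. -/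
lemma quad_le_sup_mul (b₀ B : E →L[ℝ] E →L[ℝ] ℝ) (V : Submodule ℝ E)
    (hba : BddAbove (sphSet b₀ B V)) {v : E} (hvV : v ∈ V) (hv : 0 < b₀ v v) :
    B v v ≤ sSup (sphSet b₀ B V) * b₀ v v := by
  set c : ℝ := b₀ v v with hc
  set u : E := (Real.sqrt c)⁻¹ • v with hu
  have hs : Real.sqrt c * Real.sqrt c = c := Real.mul_self_sqrt hv.le
  have hsne : Real.sqrt c ≠ 0 := by positivity
  have huu : b₀ u u = 1 := by
    simp only [hu, map_smul, ContinuousLinearMap.smul_apply, smul_eq_mul]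
    field_simp
    exact (Real.sq_sqrt hv.le).symm
  have hBu : B u u = c⁻¹ * B v v := by
    simp only [hu, map_smul, ContinuousLinearMap.smul_apply, smul_eq_mul]
    rw [← hs]
    field_simp
    rw [Real.sqrt_sq (Real.sqrt_nonneg _)]
  have hmem : B u u ∈ sphSet b₀ B V := ⟨u, V.smul_mem _ hvV, huu, rfl⟩
  have hle : B u u ≤ sSup (sphSet b₀ B V) := le_csSup hba hmem
  rw [hBu] at hle
  have h1 := mul_le_mul_of_nonneg_right hle hv.le
  have h2 : c⁻¹ * B v v * c = B v v := by field_simp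
  rw [h2] at h1
  exact h1

end MinMaxAux

namespace MinMaxAux
variable {E : Type*} [NormedAddCommGroup E] [NormedSpace ℝ E]

lemma sph_bddAbove (b₀ B : E →L[ℝ] E →L[ℝ] ℝ) (V : Submodule ℝ E) {m : ℝ} (hm : 0 < m)
    (hcoer : ∀ v : V, m * ‖v‖ ^ 2 ≤ b₀ v v) : BddAbove (sphSet b₀ B V) := by
  refine ⟨‖B‖ / m, ?_⟩
  rintro r ⟨u, huV, hu1, rfl⟩
  have h1 : m * ‖u‖ ^ 2 ≤ 1 := by
    have := hcoer ⟨u, huV⟩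
    simpa [hu1, Submodule.coe_norm] using this
  rw [sq] at h1
  have h2 : B u u ≤ ‖B‖ * ‖u‖ * ‖u‖ := (le_abs_self _).trans (abs_bilin_le B u u)
  rw [le_div_iff₀ hm]
  nlinarith [mul_le_mul_of_nonneg_left h1 (norm_nonneg B),
    mul_le_mul_of_nonneg_right h2 hm.le]

end MinMaxAux

set_option maxHeartbeats 2000000 in
set_option synthInstance.maxHeartbeats 400000 in
open MinMaxAux in
/-- Core of Theorem 4.1 (left-continuity of eigenvalues): if `(H_s)` is a monotone family of
subspaces with `H_t` contained in the closure of `⋃_{s<t} H_s`, then for every `ε > 0` there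
is `s < t` with `λ_k(H_s) < λ_k(H_t) + ε`. -/
theorem minmaxEigenvalue_left_continuous {E : Type*} [NormedAddCommGroup E] [NormedSpace ℝ E]
    (b₀ B : E →L[ℝ] E →L[ℝ] ℝ)
    (hb₀sym : ∀ u v, b₀ u v = b₀ v u) (hBsym : ∀ u v, B u v = B v u)
    (hb₀pos : ∀ u : E, u ≠ 0 → 0 < b₀ u u)
    (γ : ℝ) (hγ : ∀ u : E, γ * b₀ u u ≤ B u u)
    (k : ℕ) (hk : 1 ≤ k)
    (t : ℝ) (H : ℝ → Submodule ℝ E) (hmono : Monotone H)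
    (hdense : (H t : Set E) ⊆ closure (⋃ s ∈ Set.Iio t, (H s : Set E)))
    (hrank : ∃ V : Submodule ℝ E, V ≤ H t ∧ Module.finrank ℝ V = k) :
    ∀ ε > (0:ℝ), ∃ s < t,
      minmaxEigenvalue b₀ B k (H s) < minmaxEigenvalue b₀ B k (H t) + ε := by
  intro ε hε
  classical
  set A : Submodule ℝ E → Set ℝ := fun W =>
    { S : ℝ | ∃ V : Submodule ℝ E, V ≤ W ∧ Module.finrank ℝ V = k ∧
      S = sSup (sphSet b₀ B V) } with hA
  have hmm : ∀ W, minmaxEigenvalue b₀ B k W = sInf (A W) := fun W => rfl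
  -- generic facts
  have genFD : ∀ V : Submodule ℝ E, Module.finrank ℝ V = k → FiniteDimensional ℝ V := by
    intro V hV
    exact FiniteDimensional.of_finrank_pos (by omega : 0 < Module.finrank ℝ V)
  have genNB : ∀ V : Submodule ℝ E, Module.finrank ℝ V = k → V ≠ ⊥ := by
    intro V hV hbot
    rw [hbot] at hV
    rw [finrank_bot] at hV
    omega
  have hγle : ∀ V : Submodule ℝ E, Module.finrank ℝ V = k →
      γ ≤ sSup (sphSet b₀ B V) := by
    intro V hV
    haveI := genFD V hV
    obtain ⟨m, hm, hcoer⟩ := exists_coercive b₀ hb₀pos V (genNB V hV)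
    have hba := sph_bddAbove b₀ B V hm hcoer
    obtain ⟨u, huV, hu1⟩ := exists_unit b₀ hb₀pos V (genNB V hV)
    have h1 : γ ≤ B u u := by have := hγ u; rw [hu1] at this; linarith
    exact h1.trans (le_csSup hba ⟨u, huV, hu1, rfl⟩)
  have hbbA : ∀ W, BddBelow (A W) := by
    intro W
    refine ⟨γ, ?_⟩
    rintro S ⟨V, hVW, hVk, rfl⟩
    exact hγle V hVk
  obtain ⟨V₀, hV₀le, hV₀k⟩ := hrank
  have hAne : (A (H t)).Nonempty := ⟨_, V₀, hV₀le, hV₀k, rfl⟩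
  -- pick a near-optimal subspace V ≤ H t
  have hlt : sInf (A (H t)) < sInf (A (H t)) + ε / 2 := by linarith
  obtain ⟨S₀, hS₀mem, hS₀lt⟩ := (csInf_lt_iff (hbbA (H t)) hAne).mp hlt
  obtain ⟨V, hVle, hVk, rfl⟩ := hS₀mem
  haveI := genFD V hVk
  obtain ⟨m, hm, hcoer⟩ := exists_coercive b₀ hb₀pos V (genNB V hVk)
  have hbaV := sph_bddAbove b₀ B V hm hcoer
  have hcoerE : ∀ v : V, m * ‖(v : E)‖ ^ 2 ≤ b₀ (v : E) (v : E) := by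
    intro v
    simpa [Submodule.coe_norm] using hcoer v
  set SV : ℝ := sSup (sphSet b₀ B V) with hSV
  set X : ℝ := |SV| * ‖b₀‖ + ‖B‖ with hX
  have hX0 : 0 ≤ X := by positivity
  -- choose η and δ
  set η : ℝ := min 1 (min (m / (6 * (‖b₀‖ + 1))) (ε * m / (24 * (X + 1)))) with hηdef
  have hη0 : 0 < η := lt_min one_pos (lt_min (by positivity) (by positivity))
  have hη1 : η ≤ 1 := min_le_left _ _
  have hηb : 3 * η * ‖b₀‖ ≤ m / 2 := by
    have h1 : η ≤ m / (6 * (‖b₀‖ + 1)) := le_trans (min_le_right _ _) (min_le_left _ _)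
    have h1' : η * (6 * (‖b₀‖ + 1)) ≤ m := by
      rw [← le_div_iff₀ (by positivity)]; exact h1
    nlinarith [norm_nonneg b₀, hη0.le]
  have hηX : 6 * η * X ≤ ε / 4 * m := by
    have h1 : η ≤ ε * m / (24 * (X + 1)) := le_trans (min_le_right _ _) (min_le_right _ _)
    have h1' : η * (24 * (X + 1)) ≤ ε * m := by
      rw [← le_div_iff₀ (by positivity)]; exact h1
    nlinarith [hη0.le, hX0]
  -- basis and coordinates
  let b : Module.Basis (Fin k) ℝ V := Module.finBasisOfFinrankEq ℝ V hVk
  let g : Fin k → (V →L[ℝ] ℝ) := fun i => LinearMap.toContinuousLinearMap (b.coord i)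
  set C : ℝ := ∑ i, ‖g i‖ with hC
  have hC0 : 0 ≤ C := Finset.sum_nonneg fun i _ => ContinuousLinearMap.opNorm_nonneg _
  set δ : ℝ := η / (C + 1) with hδdef
  have hδ0 : 0 < δ := by positivity
  -- approximate the basis vectors from below
  have happrox : ∀ i : Fin k, ∃ s, s < t ∧ ∃ f, f ∈ H s ∧ ‖f - (b i : E)‖ < δ := by
    intro i
    have hmem : ((b i : E)) ∈ closure (⋃ s ∈ Set.Iio t, (H s : Set E)) :=
      hdense (hVle (b i).2)
    rw [Metric.mem_closure_iff] at hmem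
    obtain ⟨f, hfmem, hfd⟩ := hmem δ hδ0
    rw [Set.mem_iUnion₂] at hfmem
    obtain ⟨s, hs, hfs⟩ := hfmem
    refine ⟨s, hs, f, hfs, ?_⟩
    rw [← dist_eq_norm, dist_comm]
    exact hfd
  choose sf hsf f hf hfd using happrox
  haveI : Nonempty (Fin k) := ⟨⟨0, hk⟩⟩
  set s₀ : ℝ := Finset.univ.sup' Finset.univ_nonempty sf with hs₀
  have hs₀t : s₀ < t := by
    rw [hs₀, Finset.sup'_lt_iff]
    intro i _
    exact hsf i
  have hfH : ∀ i, f i ∈ H s₀ := fun i =>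
    hmono (Finset.le_sup' sf (Finset.mem_univ i)) (hf i)
  -- the perturbed map
  set T : V →ₗ[ℝ] E := ∑ i, (b.coord i).smulRight (f i) with hT
  have hTapp : ∀ v : V, T v = ∑ i, b.repr v i • f i := by
    intro v
    rw [hT]
    simp [LinearMap.sum_apply, LinearMap.smulRight_apply, Module.Basis.coord_apply]
  have hιapp : ∀ v : V, (v : E) = ∑ i, b.repr v i • (b i : E) := by
    intro v
    have h := congrArg (V.subtype) (b.sum_repr v)
    simp only [map_sum, map_smul, Submodule.coe_subtype] at h
    exact h.symm
  have hTdiff : ∀ v : V, ‖T v - (v : E)‖ ≤ η * ‖(v : E)‖ := by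
    intro v
    have h1 : T v - (v : E) = ∑ i, b.repr v i • (f i - (b i : E)) := by
      rw [hTapp v]
      rw [hιapp v]
      rw [← Finset.sum_sub_distrib]
      simp [smul_sub]
    rw [h1]
    have h2 : ∀ i : Fin k, ‖b.repr v i • (f i - (b i : E))‖ ≤ ‖g i‖ * ‖(v : E)‖ * δ := by
      intro i
      rw [norm_smul, Real.norm_eq_abs]
      have h3 : |b.repr v i| ≤ ‖g i‖ * ‖(v : E)‖ := by
        have h4 := (g i).le_opNorm v
        simpa [g, Real.norm_eq_abs, Submodule.coe_norm] using h4
      exact mul_le_mul h3 (hfd i).le (norm_nonneg _)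
        (mul_nonneg (ContinuousLinearMap.opNorm_nonneg _) (norm_nonneg _))
    calc ‖∑ i, b.repr v i • (f i - (b i : E))‖ ≤ ∑ i, ‖b.repr v i • (f i - (b i : E))‖ :=
          norm_sum_le _ _
      _ ≤ ∑ i : Fin k, ‖g i‖ * ‖(v : E)‖ * δ := Finset.sum_le_sum fun i _ => h2 i
      _ = C * ‖(v : E)‖ * δ := by rw [hC]; rw [Finset.sum_mul, Finset.sum_mul]
      _ ≤ η * ‖(v : E)‖ := by
          have h5 : C * δ ≤ η := by
            rw [hδdef, mul_div_assoc']
            rw [div_le_iff₀ (by positivity)]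
            nlinarith [hη0.le, hC0]
          nlinarith [norm_nonneg (v : E), hδ0.le, hC0]
  have hquad : ∀ (Q : E →L[ℝ] E →L[ℝ] ℝ) (v : V),
      |Q (T v) (T v) - Q (v : E) (v : E)| ≤ 3 * η * ‖Q‖ * ‖(v : E)‖ ^ 2 := by
    intro Q v
    have h1 := quad_diff_le Q (T v) (v : E)
    have h2 : ‖T v - (v : E)‖ ≤ η * ‖(v : E)‖ := hTdiff v
    have h3 : ‖T v‖ ≤ 2 * ‖(v : E)‖ := by
      have h4 : ‖T v‖ ≤ ‖(v : E)‖ + ‖T v - (v : E)‖ := by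
        have := norm_add_le (T v - (v : E)) (v : E)
        simpa [sub_add_cancel, add_comm] using this
      nlinarith [norm_nonneg (v : E)]
    have hQ0 : (0:ℝ) ≤ ‖Q‖ := ContinuousLinearMap.opNorm_nonneg Q
    have hv0 : (0:ℝ) ≤ ‖(v : E)‖ := norm_nonneg _
    have hd0 : (0:ℝ) ≤ ‖T v - (v : E)‖ := norm_nonneg _
    nlinarith [mul_le_mul (mul_le_mul le_rfl h3 (norm_nonneg _) hQ0) h2 hd0
        (mul_nonneg hQ0 (by positivity : (0:ℝ) ≤ 2 * ‖(v : E)‖)),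
      mul_le_mul (mul_le_mul le_rfl h2 hd0 hQ0) (le_refl ‖(v : E)‖) hv0
        (mul_nonneg hQ0 (mul_nonneg hη0.le hv0))]
  -- injectivity
  have hinj : Function.Injective T := by
    rw [← LinearMap.ker_eq_bot, Submodule.eq_bot_iff]
    intro v hv0
    by_contra hvne
    have hvE : (v : E) ≠ 0 := by simpa using hvne
    have hb := hquad b₀ v
    rw [LinearMap.mem_ker] at hv0
    rw [hv0] at hb
    simp only [map_zero, ContinuousLinearMap.zero_apply, zero_sub, abs_neg] at hb
    have hpos := hb₀pos _ hvE
    have habs : b₀ (v : E) (v : E) ≤ 3 * η * ‖b₀‖ * ‖(v : E)‖ ^ 2 := by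
      rw [abs_of_pos hpos] at hb
      exact hb
    have hcv := hcoerE v
    have hnv : (0:ℝ) < ‖(v : E)‖ ^ 2 := pow_pos (norm_pos_iff.mpr hvE) 2
    nlinarith
  set V' : Submodule ℝ E := LinearMap.range T with hV'
  have hV'le : V' ≤ H s₀ := by
    rintro x ⟨v, rfl⟩
    rw [hTapp]
    exact Submodule.sum_mem _ fun i _ => Submodule.smul_mem _ _ (hfH i)
  have hV'k : Module.finrank ℝ V' = k := by
    rw [hV', LinearMap.finrank_range_of_inj hinj, hVk]
  -- bound Rayleigh values on V'
  have hbound : ∀ r ∈ sphSet b₀ B V', r ≤ SV + ε / 4 := by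
    rintro r ⟨u, huV', hu1, rfl⟩
    obtain ⟨v, rfl⟩ := huV'
    have hvne : v ≠ 0 := by
      rintro rfl
      simp only [map_zero, ContinuousLinearMap.zero_apply] at hu1
      norm_num at hu1
    have hvE : (v : E) ≠ 0 := by simpa using hvne
    have hb₀v : 0 < b₀ (v : E) (v : E) := hb₀pos _ hvE
    have hquadb := hquad b₀ v
    have hquadB := hquad B v
    rw [hu1] at hquadb
    have hΔ : |b₀ (v : E) (v : E) - 1| ≤ 3 * η * ‖b₀‖ * ‖(v : E)‖ ^ 2 := by
      rw [abs_sub_comm]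
      exact hquadb
    have hcv := hcoerE v
    -- ‖v‖² ≤ 2/m
    have hnv2 : ‖(v : E)‖ ^ 2 * m ≤ 2 := by
      have h6 := abs_le.mp hΔ
      nlinarith [sq_nonneg ‖(v : E)‖, hηb, hm]
    have hBle : B (v : E) (v : E) ≤ SV * b₀ (v : E) (v : E) :=
      quad_le_sup_mul b₀ B V hbaV v.2 hb₀v
    have h7 : SV * (b₀ (v : E) (v : E) - 1) ≤ |SV| * (3 * η * ‖b₀‖ * ‖(v : E)‖ ^ 2) := by
      calc SV * (b₀ (v : E) (v : E) - 1) ≤ |SV * (b₀ (v : E) (v : E) - 1)| := le_abs_self _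
        _ = |SV| * |b₀ (v : E) (v : E) - 1| := abs_mul _ _
        _ ≤ |SV| * (3 * η * ‖b₀‖ * ‖(v : E)‖ ^ 2) :=
            mul_le_mul_of_nonneg_left hΔ (abs_nonneg _)
    have h8 := abs_le.mp hquadB
    -- combine
    have h9 : B (T v) (T v) ≤ SV + 3 * η * X * ‖(v : E)‖ ^ 2 := by
      rw [hX]
      nlinarith [h8.2, hBle, h7]
    have h10 : 3 * η * X * ‖(v : E)‖ ^ 2 ≤ ε / 4 := by
      nlinarith [hηX, hnv2, hη0.le, hX0, hm, sq_nonneg ‖(v : E)‖]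
    linarith
  have hV'ne : (sphSet b₀ B V').Nonempty := by
    obtain ⟨u, h1, h2⟩ := exists_unit b₀ hb₀pos V' (genNB V' hV'k)
    exact ⟨B u u, u, h1, h2, rfl⟩
  have hSup' : sSup (sphSet b₀ B V') ≤ SV + ε / 4 := csSup_le hV'ne hbound
  refine ⟨s₀, hs₀t, ?_⟩
  rw [hmm, hmm]
  have hmem' : sSup (sphSet b₀ B V') ∈ A (H s₀) := ⟨V', hV'le, hV'k, rfl⟩
  calc sInf (A (H s₀)) ≤ sSup (sphSet b₀ B V') := csInf_le (hbbA (H s₀)) hmem'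
    _ ≤ SV + ε / 4 := hSup'
    _ < sInf (A (H t)) + ε := by linarith
end

section
/- (Corollary 3.1, Euclidean formulation: no step functions in W^{1,2}.) Let Ω ⊆ ℝⁿ be a nonempty connected open set, let D ⊆ Ω be a measurable set with both D and Ω \ D of positive Lebesgue measure, and let a ≠ b be real numbers. Define g : ℝⁿ → ℝ by g(p) = a if p ∈ D and g(p) = b otherwise. Then there is no sequence (f_k) of functions ℝⁿ → ℝ, each continuously differentiable on Ω, such that ∫_Ω (f_k − g)² → 0 as k → ∞ and the gradients are Cauchy in L²(Ω), i.e. for every ε > 0 there is N such that for all k, j ≥ N, ∫_Ω ‖∇f_k − ∇f_j‖² < ε. -/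
open MeasureTheory Set Filter Topology
open scoped Classical

open scoped ENNReal

namespace NoStepAux

lemma ofReal_sq (x : ℝ) : ENNReal.ofReal (x^2) = (ENNReal.ofReal |x|) ^ (2:ℝ) := by
  rw [ENNReal.ofReal_rpow_of_nonneg (abs_nonneg x) (by norm_num)]
  norm_num [sq_abs]

lemma rpow_half_sq (X : ℝ≥0∞) : (X ^ (1/2:ℝ)) ^ (2:ℝ) = X := by
  rw [← ENNReal.rpow_mul]; norm_num

lemma rpow_sq_half (X : ℝ≥0∞) : (X ^ (2:ℝ)) ^ (1/2:ℝ) = X := by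
  rw [← ENNReal.rpow_mul]; norm_num

lemma tri {α : Type*} [MeasurableSpace α] {μ : Measure α} {w₁ w₂ : α → ℝ}
    (h₁ : AEMeasurable w₁ μ) (h₂ : AEMeasurable w₂ μ) :
    (∫⁻ a, ENNReal.ofReal ((w₁ a + w₂ a)^2) ∂μ) ^ (1/2:ℝ)
      ≤ (∫⁻ a, ENNReal.ofReal ((w₁ a)^2) ∂μ) ^ (1/2:ℝ)
        + (∫⁻ a, ENNReal.ofReal ((w₂ a)^2) ∂μ) ^ (1/2:ℝ) := by
  have h₁' : AEMeasurable (fun a => ENNReal.ofReal |w₁ a|) μ :=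
    ENNReal.measurable_ofReal.comp_aemeasurable (continuous_abs.measurable.comp_aemeasurable h₁)
  have h₂' : AEMeasurable (fun a => ENNReal.ofReal |w₂ a|) μ :=
    ENNReal.measurable_ofReal.comp_aemeasurable (continuous_abs.measurable.comp_aemeasurable h₂)
  have key := ENNReal.lintegral_Lp_add_le h₁' h₂' (one_le_two : (1:ℝ) ≤ 2)
  calc (∫⁻ a, ENNReal.ofReal ((w₁ a + w₂ a)^2) ∂μ) ^ (1/2:ℝ)
      ≤ (∫⁻ a, (ENNReal.ofReal |w₁ a| + ENNReal.ofReal |w₂ a|) ^ (2:ℝ) ∂μ) ^ (1/2:ℝ) := by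
        apply ENNReal.rpow_le_rpow _ (by norm_num)
        apply lintegral_mono
        intro a
        simp only []
        rw [ofReal_sq]
        exact ENNReal.rpow_le_rpow (le_trans (ENNReal.ofReal_le_ofReal (abs_add_le _ _))
          (ENNReal.ofReal_add_le)) (by norm_num)
    _ ≤ (∫⁻ a, (ENNReal.ofReal |w₁ a|) ^ (2:ℝ) ∂μ) ^ (1/2:ℝ)
        + (∫⁻ a, (ENNReal.ofReal |w₂ a|) ^ (2:ℝ) ∂μ) ^ (1/2:ℝ) := key
    _ = _ := by simp_rw [← ofReal_sq]

end NoStepAux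

namespace NoStepAux2
variable {n : ℕ}

/-- Shift a lintegral: if `s + h ⊆ A` then `∫⁻_s F(x+h) ≤ ∫⁻_A F`. -/
lemma shift_le {F : EuclideanSpace ℝ (Fin n) → ℝ≥0∞} {A s : Set (EuclideanSpace ℝ (Fin n))}
    (hA : MeasurableSet A) (hs : MeasurableSet s)
    (hF : AEMeasurable F (volume.restrict A)) (h : EuclideanSpace ℝ (Fin n))
    (hsub : ∀ x ∈ s, x + h ∈ A) :
    ∫⁻ x in s, F (x + h) ≤ ∫⁻ y in A, F y := by
  set G := hF.mk F with hGdef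
  have hGm : Measurable G := hF.measurable_mk
  have hae : ∀ᵐ y ∂volume, y ∈ A → F y = G y := (ae_restrict_iff' hA).mp hF.ae_eq_mk
  have hpre : ∀ᵐ x ∂volume, x + h ∈ A → F (x + h) = G (x + h) := by
    have := (measurePreserving_add_right (volume : Measure (EuclideanSpace ℝ (Fin n)))
      h).quasiMeasurePreserving.ae hae
    exact this
  calc ∫⁻ x in s, F (x + h)
      = ∫⁻ x in s, G (x + h) := by
        apply lintegral_congr_ae
        refine (ae_restrict_iff' hs).mpr ?_
        filter_upwards [hpre] with x hx hxs
        exact hx (hsub x hxs)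
    _ = ∫⁻ x, s.indicator (fun x => G (x + h)) x := (lintegral_indicator hs _).symm
    _ ≤ ∫⁻ x, A.indicator G (x + h) := by
        apply lintegral_mono
        intro x
        simp only []
        by_cases hxs : x ∈ s
        · rw [Set.indicator_of_mem hxs, Set.indicator_of_mem (hsub x hxs)]
        · rw [Set.indicator_of_notMem hxs]; exact zero_le
    _ = ∫⁻ y, A.indicator G y :=
        (measurePreserving_add_right volume h).lintegral_comp (hGm.indicator hA)
    _ = ∫⁻ y in A, G y := lintegral_indicator hA _
    _ = ∫⁻ y in A, F y := (lintegral_congr_ae hF.ae_eq_mk).symm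

end NoStepAux2

namespace NoStepAux3
variable {n : ℕ}

local notation "E" => EuclideanSpace ℝ (Fin n)

/-- Pointwise FTC + Cauchy–Schwarz estimate for a `C¹` function. -/
lemma ftc_sq {Ω : Set (EuclideanSpace ℝ (Fin n))} (hΩopen : IsOpen Ω)
    {u : EuclideanSpace ℝ (Fin n) → ℝ} (hu : ContDiffOn ℝ 1 u Ω)
    {x h : EuclideanSpace ℝ (Fin n)}
    (hseg : ∀ t ∈ Icc (0:ℝ) 1, x + t • h ∈ Ω) :
    ENNReal.ofReal ((u (x + h) - u x)^2)
      ≤ ENNReal.ofReal (‖h‖^2) * ∫⁻ t in Ioc (0:ℝ) 1,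
          ENNReal.ofReal (‖fderiv ℝ u (x + t • h)‖^2) := by
  set w : ℝ → ℝ := fun t => (fderiv ℝ u (x + t • h)) h with hw
  have hd : ∀ t ∈ Icc (0:ℝ) 1, HasDerivAt (fun s : ℝ => u (x + s • h)) (w t) t := by
    intro t ht
    have hx : DifferentiableAt ℝ u (x + t • h) :=
      (hu.differentiableOn one_ne_zero).differentiableAt (hΩopen.mem_nhds (hseg t ht))
    have h2 : HasDerivAt (fun s : ℝ => x + s • h) h t := by
      simpa using ((hasDerivAt_id t).smul_const h).const_add x
    exact hx.hasFDerivAt.comp_hasDerivAt t h2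
  have hmap : ContinuousOn (fun t : ℝ => x + t • h) (Icc (0:ℝ) 1) :=
    (continuous_const.add (continuous_id.smul continuous_const)).continuousOn
  have hcont : ContinuousOn w (Icc (0:ℝ) 1) := by
    have hDf : ContinuousOn (fderiv ℝ u) Ω := hu.continuousOn_fderiv_of_isOpen hΩopen le_rfl
    exact (hDf.comp hmap hseg).clm_apply continuousOn_const
  have hInt : IntervalIntegrable w volume 0 1 := by
    apply ContinuousOn.intervalIntegrable
    rwa [uIcc_of_le zero_le_one]
  have heq : u (x + h) - u x = ∫ t in (0:ℝ)..1, w t := by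
    have := intervalIntegral.integral_eq_sub_of_hasDerivAt
      (f := fun s : ℝ => u (x + s • h)) (f' := w)
      (fun t ht => hd t (by rwa [uIcc_of_le zero_le_one] at ht)) hInt
    simpa using this.symm
  have hwae : AEMeasurable w (volume.restrict (Ioc (0:ℝ) 1)) :=
    (hcont.mono Ioc_subset_Icc_self).aemeasurable measurableSet_Ioc
  have hwae' : AEMeasurable (fun t => ENNReal.ofReal |w t|) (volume.restrict (Ioc (0:ℝ) 1)) :=
    ENNReal.measurable_ofReal.comp_aemeasurable
      (continuous_abs.measurable.comp_aemeasurable hwae)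
  -- Step 1: |Δ| ≤ ∫⁻ |w|
  have habs : ENNReal.ofReal |u (x + h) - u x| ≤ ∫⁻ t in Ioc (0:ℝ) 1, ENNReal.ofReal |w t| := by
    rw [heq, intervalIntegral.integral_of_le zero_le_one]
    calc ENNReal.ofReal |∫ t in Ioc (0:ℝ) 1, w t|
        = ‖∫ t in Ioc (0:ℝ) 1, w t‖ₑ := by
          rw [← Real.enorm_eq_ofReal_abs]
      _ ≤ ∫⁻ t in Ioc (0:ℝ) 1, ‖w t‖ₑ := enorm_integral_le_lintegral_enorm _
      _ = ∫⁻ t in Ioc (0:ℝ) 1, ENNReal.ofReal |w t| := by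
          simp_rw [Real.enorm_eq_ofReal_abs]
  -- Step 2: Cauchy–Schwarz
  have hCS : (∫⁻ t in Ioc (0:ℝ) 1, ENNReal.ofReal |w t|)
      ≤ (∫⁻ t in Ioc (0:ℝ) 1, (ENNReal.ofReal |w t|) ^ (2:ℝ)) ^ (1/2:ℝ) := by
    have hpq : (2:ℝ).HolderConjugate 2 := Real.HolderConjugate.two_two
    have := ENNReal.lintegral_mul_le_Lp_mul_Lq (volume.restrict (Ioc (0:ℝ) 1)) hpq
      hwae' aemeasurable_const (g := fun _ => (1:ℝ≥0∞))
    simpa [Real.volume_Ioc] using this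
  -- combine
  have hsq : ENNReal.ofReal ((u (x + h) - u x)^2)
      ≤ ∫⁻ t in Ioc (0:ℝ) 1, (ENNReal.ofReal |w t|) ^ (2:ℝ) := by
    calc ENNReal.ofReal ((u (x + h) - u x)^2)
        = (ENNReal.ofReal |u (x + h) - u x|) ^ (2:ℝ) := NoStepAux.ofReal_sq _
      _ ≤ ((∫⁻ t in Ioc (0:ℝ) 1, (ENNReal.ofReal |w t|) ^ (2:ℝ)) ^ (1/2:ℝ)) ^ (2:ℝ) :=
          ENNReal.rpow_le_rpow (le_trans habs hCS) (by norm_num)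
      _ = _ := NoStepAux.rpow_half_sq _
  refine le_trans hsq ?_
  rw [← lintegral_const_mul' _ _ (by simp : ENNReal.ofReal (‖h‖^2) ≠ ⊤)]
  apply lintegral_mono
  intro t
  simp only []
  rw [← NoStepAux.ofReal_sq]
  have hb : (w t)^2 ≤ ‖h‖^2 * ‖fderiv ℝ u (x + t • h)‖^2 := by
    have h1 : |w t| ≤ ‖fderiv ℝ u (x + t • h)‖ * ‖h‖ :=
      (fderiv ℝ u (x + t • h)).le_opNorm h
    calc (w t)^2 = |w t|^2 := (sq_abs _).symm
      _ ≤ (‖fderiv ℝ u (x + t • h)‖ * ‖h‖)^2 := by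
          apply pow_le_pow_left₀ (abs_nonneg _) h1
      _ = ‖h‖^2 * ‖fderiv ℝ u (x + t • h)‖^2 := by ring
  calc ENNReal.ofReal ((w t)^2) ≤ ENNReal.ofReal (‖h‖^2 * ‖fderiv ℝ u (x + t • h)‖^2) :=
        ENNReal.ofReal_le_ofReal hb
    _ = ENNReal.ofReal (‖h‖^2) * ENNReal.ofReal (‖fderiv ℝ u (x + t • h)‖^2) :=
        ENNReal.ofReal_mul (sq_nonneg _)

end NoStepAux3
namespace NoStepAux4
open NoStepAux NoStepAux2 NoStepAux3
variable {n : ℕ}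

lemma ball_step {x₀ : EuclideanSpace ℝ (Fin n)} {r ρ : ℝ} {h : EuclideanSpace ℝ (Fin n)}
    (hrs : ρ + ‖h‖ ≤ r) :
    ∀ x ∈ Metric.ball x₀ ρ, ∀ t ∈ Icc (0:ℝ) 1, x + t • h ∈ Metric.ball x₀ r := by
  intro x hx t ht
  rw [Metric.mem_ball] at hx ⊢
  have h1 : dist (x + t • h) x = ‖t • h‖ := by
    rw [dist_eq_norm]; congr 1; abel
  have h2 : ‖t • h‖ ≤ ‖h‖ := by
    rw [norm_smul, Real.norm_eq_abs, abs_of_nonneg ht.1]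
    nlinarith [norm_nonneg h, ht.2]
  calc dist (x + t • h) x₀ ≤ dist (x + t • h) x + dist x x₀ := dist_triangle _ _ _
    _ < ‖h‖ + ρ := by rw [h1]; exact add_lt_add_of_le_of_lt h2 hx
    _ ≤ r := by linarith

/-- Translation estimate for a `C¹` function on a ball. -/
lemma trans_est {Ω : Set (EuclideanSpace ℝ (Fin n))} (hΩopen : IsOpen Ω)
    {u : EuclideanSpace ℝ (Fin n) → ℝ} (hu : ContDiffOn ℝ 1 u Ω)
    {x₀ : EuclideanSpace ℝ (Fin n)} {r ρ : ℝ}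
    (hball : Metric.closedBall x₀ r ⊆ Ω) (h : EuclideanSpace ℝ (Fin n))
    (hrs : ρ + ‖h‖ ≤ r) :
    ∫⁻ x in Metric.ball x₀ ρ, ENNReal.ofReal ((u (x + h) - u x)^2)
      ≤ ENNReal.ofReal (‖h‖^2) * ∫⁻ x in Metric.ball x₀ r, ENNReal.ofReal (‖fderiv ℝ u x‖^2) := by
  have hin := ball_step (x₀ := x₀) hrs
  have hbΩ : Metric.ball x₀ r ⊆ Ω := Metric.ball_subset_closedBall.trans hball
  set G : EuclideanSpace ℝ (Fin n) → ℝ≥0∞ := fun y => ENNReal.ofReal (‖fderiv ℝ u y‖^2)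
    with hGdef
  have hGm : Measurable G := by
    apply ENNReal.measurable_ofReal.comp
    exact ((measurable_fderiv ℝ u).norm.pow_const 2)
  calc ∫⁻ x in Metric.ball x₀ ρ, ENNReal.ofReal ((u (x + h) - u x)^2)
      ≤ ∫⁻ x in Metric.ball x₀ ρ,
          ENNReal.ofReal (‖h‖^2) * ∫⁻ t in Ioc (0:ℝ) 1, G (x + t • h) := by
        apply lintegral_mono_ae
        refine (ae_restrict_iff' measurableSet_ball).mpr (ae_of_all _ ?_)
        intro x hx
        exact ftc_sq hΩopen hu (fun t ht => hbΩ (hin x hx t ht))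
    _ = ENNReal.ofReal (‖h‖^2) * ∫⁻ x in Metric.ball x₀ ρ,
          ∫⁻ t in Ioc (0:ℝ) 1, G (x + t • h) :=
        lintegral_const_mul' _ _ (by simp)
    _ = ENNReal.ofReal (‖h‖^2) * ∫⁻ t in Ioc (0:ℝ) 1,
          ∫⁻ x in Metric.ball x₀ ρ, G (x + t • h) := by
        congr 1
        apply lintegral_lintegral_swap
        apply Measurable.aemeasurable
        exact hGm.comp (measurable_fst.add (measurable_snd.smul_const h))
    _ ≤ ENNReal.ofReal (‖h‖^2) * ∫⁻ t in Ioc (0:ℝ) 1,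
          ∫⁻ x in Metric.ball x₀ r, G x := by
        apply mul_le_mul_right
        apply lintegral_mono_ae
        refine (ae_restrict_iff' measurableSet_Ioc).mpr (ae_of_all _ ?_)
        intro t ht
        exact shift_le measurableSet_ball measurableSet_ball
          hGm.aemeasurable (t • h) (fun x hx => hin x hx t (Ioc_subset_Icc_self ht))
    _ = ENNReal.ofReal (‖h‖^2) * ∫⁻ x in Metric.ball x₀ r, G x := by
        rw [setLIntegral_const, Real.volume_Ioc]
        simp

end NoStepAux4
namespace NoStepAux5
open NoStepAux NoStepAux2 NoStepAux3 NoStepAux4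
variable {n : ℕ}

lemma measurable_T {D : Set (EuclideanSpace ℝ (Fin n))} (hD : MeasurableSet D)
    (h : EuclideanSpace ℝ (Fin n)) :
    MeasurableSet {x : EuclideanSpace ℝ (Fin n) | ¬ ((x ∈ D) ↔ (x + h ∈ D))} := by
  have : {x : EuclideanSpace ℝ (Fin n) | ¬ ((x ∈ D) ↔ (x + h ∈ D))}
      = (D ∩ ((· + h) ⁻¹' D)ᶜ) ∪ (Dᶜ ∩ ((· + h) ⁻¹' D)) := by
    ext x; by_cases h1 : x ∈ D <;> by_cases h2 : x + h ∈ D <;>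
      simp [h1, h2]
  rw [this]
  have hpre : MeasurableSet ((· + h) ⁻¹' D) := (measurable_add_const h) hD
  exact (hD.inter hpre.compl).union (hD.compl.inter hpre)

lemma lint_step {D : Set (EuclideanSpace ℝ (Fin n))} (hD : MeasurableSet D)
    (a b : ℝ) (h : EuclideanSpace ℝ (Fin n)) {s : Set (EuclideanSpace ℝ (Fin n))}
    (hs : MeasurableSet s) :
    ∫⁻ x in s, ENNReal.ofReal
        (((if x + h ∈ D then a else b) - (if x ∈ D then a else b))^2)
      = ENNReal.ofReal ((a-b)^2)
        * volume ({x | ¬ ((x ∈ D) ↔ (x + h ∈ D))} ∩ s) := by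
  set T := {x : EuclideanSpace ℝ (Fin n) | ¬ ((x ∈ D) ↔ (x + h ∈ D))} with hT
  have hTm := measurable_T hD h
  have hpt : ∀ x, ENNReal.ofReal
      (((if x + h ∈ D then a else b) - (if x ∈ D then a else b))^2)
      = T.indicator (fun _ => ENNReal.ofReal ((a-b)^2)) x := by
    intro x
    by_cases h1 : x ∈ D <;> by_cases h2 : x + h ∈ D <;>
      simp [Set.indicator, hT, h1, h2] <;> ring_nf
  calc ∫⁻ x in s, ENNReal.ofReal
        (((if x + h ∈ D then a else b) - (if x ∈ D then a else b))^2)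
      = ∫⁻ x in s, T.indicator (fun _ => ENNReal.ofReal ((a-b)^2)) x :=
        lintegral_congr hpt
    _ = ∫⁻ _ in T, ENNReal.ofReal ((a-b)^2) ∂(volume.restrict s) :=
        lintegral_indicator hTm _
    _ = ENNReal.ofReal ((a-b)^2) * volume (T ∩ s) := by
        rw [setLIntegral_const, Measure.restrict_apply hTm]

/-- Pigeonhole along a segment. -/
lemma pigeon {D : Set (EuclideanSpace ℝ (Fin n))} {x h' : EuclideanSpace ℝ (Fin n)} {m : ℕ}
    (_hm : 0 < m) (hx : ¬ ((x ∈ D) ↔ (x + (m:ℝ) • h' ∈ D))) :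
    ∃ i < m, ¬ ((x + (i:ℝ) • h' ∈ D) ↔ (x + (i:ℝ) • h' + h' ∈ D)) := by
  by_contra hc
  push_neg at hc
  have key : ∀ j ≤ m, ((x ∈ D) ↔ (x + (j:ℝ) • h' ∈ D)) := by
    intro j hj
    induction j with
    | zero => simp
    | succ i ih =>
      have hi : i < m := lt_of_lt_of_le (Nat.lt_succ_self i) hj
      have h1 := hc i hi
      have h2 : x + (i:ℝ) • h' + h' = x + ((i+1 : ℕ):ℝ) • h' := by
        push_cast
        rw [add_smul, one_smul, add_assoc]
      rw [h2] at h1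
      exact (ih (le_of_lt hi)).trans h1
  exact hx (key m le_rfl)

end NoStepAux5
namespace NoStepAux6
open NoStepAux NoStepAux2 NoStepAux3 NoStepAux4 NoStepAux5
variable {n : ℕ}

lemma key_ST
    {Ω D : Set (EuclideanSpace ℝ (Fin n))} (hΩopen : IsOpen Ω)
    (hDmeas : MeasurableSet D) {a b : ℝ}
    {f : ℕ → EuclideanSpace ℝ (Fin n) → ℝ}
    (hf1 : ∀ k, ContDiffOn ℝ 1 (f k) Ω)
    (hf2 : Tendsto (fun k =>
        ∫⁻ p in Ω, ENNReal.ofReal ((f k p - (if p ∈ D then a else b)) ^ 2))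
      atTop (nhds 0))
    (hf3 : ∀ ε > (0:ℝ), ∃ N, ∀ k ≥ N, ∀ j ≥ N,
        (∫⁻ p in Ω, ENNReal.ofReal (‖fderiv ℝ (f k) p - fderiv ℝ (f j) p‖ ^ 2))
          < ENNReal.ofReal ε)
    (x₀ : EuclideanSpace ℝ (Fin n)) (r : ℝ)
    (hball : Metric.closedBall x₀ r ⊆ Ω) :
    ∃ C : ℝ≥0∞, C ≠ ⊤ ∧ ∀ (ρ : ℝ) (h : EuclideanSpace ℝ (Fin n)), ρ + ‖h‖ ≤ r →
      (∫⁻ x in Metric.ball x₀ ρ, ENNReal.ofReal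
          (((if x + h ∈ D then a else b) - (if x ∈ D then a else b))^2)) ^ (1/2:ℝ)
        ≤ C * ENNReal.ofReal ‖h‖ := by
  classical
  set g : EuclideanSpace ℝ (Fin n) → ℝ := fun p => if p ∈ D then a else b with hg
  have hgm : Measurable g := Measurable.ite hDmeas measurable_const measurable_const
  obtain ⟨N, hN⟩ := hf3 1 one_pos
  -- the constant
  have hDfN_cont : ContinuousOn (fderiv ℝ (f N)) Ω :=
    (hf1 N).continuousOn_fderiv_of_isOpen hΩopen le_rfl
  obtain ⟨K, hK⟩ := (isCompact_closedBall x₀ r).exists_bound_of_continuousOn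
    (hDfN_cont.mono hball)
  set M := ∫⁻ x in Metric.ball x₀ r, ENNReal.ofReal (‖fderiv ℝ (f N) x‖^2) with hM
  have hMfin : M ≠ ⊤ := by
    have hMle : M ≤ ENNReal.ofReal (K^2) * volume (Metric.ball x₀ r) := by
      rw [← setLIntegral_const]
      apply lintegral_mono_ae
      refine (ae_restrict_iff' measurableSet_ball).mpr (ae_of_all _ ?_)
      intro x hx
      apply ENNReal.ofReal_le_ofReal
      have h1 := hK x (Metric.ball_subset_closedBall hx)
      nlinarith [norm_nonneg (fderiv ℝ (f N) x)]
    exact ne_top_of_le_ne_top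
      (ENNReal.mul_ne_top ENNReal.ofReal_ne_top measure_ball_lt_top.ne) hMle
  refine ⟨M ^ (1/2:ℝ) + 1, ?_, ?_⟩
  · exact ENNReal.add_ne_top.mpr ⟨ENNReal.rpow_ne_top_of_nonneg (by norm_num) hMfin, ENNReal.one_ne_top⟩
  intro ρ h hρh
  set C : ℝ≥0∞ := M ^ (1/2:ℝ) + 1 with hC
  set s := Metric.ball x₀ ρ with hs
  have hsub : ∀ x ∈ s, x + h ∈ Metric.ball x₀ r := by
    intro x hx
    have := ball_step hρh x hx 1 ⟨zero_le_one, le_rfl⟩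
    rwa [one_smul] at this
  have hsr : s ⊆ Metric.ball x₀ r :=
    Metric.ball_subset_ball (by linarith [norm_nonneg h])
  have hrΩ : Metric.ball x₀ r ⊆ Ω := Metric.ball_subset_closedBall.trans hball
  have hsΩ : s ⊆ Ω := hsr.trans hrΩ
  have hsubΩ : ∀ x ∈ s, x + h ∈ Ω := fun x hx => hrΩ (hsub x hx)
  have hnorm : ENNReal.ofReal (‖h‖^2) = (ENNReal.ofReal ‖h‖)^(2:ℝ) := by
    rw [ofReal_sq ‖h‖, abs_norm]
  -- measurability on restrict s
  have hcont_add : Continuous (fun x : EuclideanSpace ℝ (Fin n) => x + h) :=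
    continuous_add_right h
  have hfk_ae : ∀ k', AEMeasurable (f k') (volume.restrict s) := fun k' =>
    ((hf1 k').continuousOn.mono hsΩ).aemeasurable measurableSet_ball
  have hfkh_ae : ∀ k', AEMeasurable (fun x => f k' (x + h)) (volume.restrict s) := fun k' =>
    (((hf1 k').continuousOn.comp hcont_add.continuousOn hsubΩ)).aemeasurable measurableSet_ball
  have hg_ae : AEMeasurable g (volume.restrict s) := hgm.aemeasurable
  have hgh_ae : AEMeasurable (fun x => g (x + h)) (volume.restrict s) :=
    (hgm.comp (measurable_add_const h)).aemeasurable
  show (∫⁻ x in s, ENNReal.ofReal ((g (x+h) - g x)^2)) ^ (1/2:ℝ) ≤ C * ENNReal.ofReal ‖h‖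
  apply ENNReal.le_of_forall_pos_le_add
  intro δ hδ hfin
  -- choose k
  have htailpos : (0:ℝ≥0∞) < ((δ:ℝ≥0∞)/2)^(2:ℝ) := by
    apply ENNReal.rpow_pos
    · exact ENNReal.div_pos (by exact_mod_cast hδ.ne') ENNReal.ofNat_ne_top
    · exact (ENNReal.div_lt_top ENNReal.coe_ne_top (by norm_num)).ne
  obtain ⟨k, hk, hkN⟩ := ((hf2.eventually_lt_const htailpos).and (eventually_ge_atTop N)).exists
  set tail : ℝ≥0∞ := (δ:ℝ≥0∞)/2 with htaildef
  -- bound on the L² distance over Ω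
  have hT3 : (∫⁻ x in s, ENNReal.ofReal ((f k x - g x)^2)) ^ (1/2:ℝ) ≤ tail := by
    have h1 : (∫⁻ x in s, ENNReal.ofReal ((f k x - g x)^2))
        ≤ ∫⁻ p in Ω, ENNReal.ofReal ((f k p - g p)^2) :=
      lintegral_mono' (Measure.restrict_mono hsΩ le_rfl) le_rfl
    calc (∫⁻ x in s, ENNReal.ofReal ((f k x - g x)^2)) ^ (1/2:ℝ)
        ≤ (tail^(2:ℝ)) ^ (1/2:ℝ) :=
          ENNReal.rpow_le_rpow (le_of_lt (lt_of_le_of_lt h1 hk)) (by norm_num)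
      _ = tail := rpow_sq_half _
  have hT1 : (∫⁻ x in s, ENNReal.ofReal ((g (x+h) - f k (x+h))^2)) ^ (1/2:ℝ) ≤ tail := by
    have heqF : ∀ y, ENNReal.ofReal ((g y - f k y)^2) = ENNReal.ofReal ((f k y - g y)^2) := by
      intro y; congr 1; ring
    have hF_ae : AEMeasurable (fun y => ENNReal.ofReal ((f k y - g y)^2))
        (volume.restrict Ω) := by
      apply ENNReal.measurable_ofReal.comp_aemeasurable
      exact ((((hf1 k).continuousOn.aemeasurable hΩopen.measurableSet).sub
        hgm.aemeasurable).pow_const 2)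
    have h1 : (∫⁻ x in s, ENNReal.ofReal ((g (x+h) - f k (x+h))^2))
        ≤ ∫⁻ p in Ω, ENNReal.ofReal ((f k p - g p)^2) := by
      calc (∫⁻ x in s, ENNReal.ofReal ((g (x+h) - f k (x+h))^2))
          = ∫⁻ x in s, ENNReal.ofReal ((f k (x+h) - g (x+h))^2) := by
            apply lintegral_congr; intro x; rw [heqF (x+h)]
        _ ≤ _ := shift_le hΩopen.measurableSet measurableSet_ball hF_ae h hsubΩ
    calc (∫⁻ x in s, ENNReal.ofReal ((g (x+h) - f k (x+h))^2)) ^ (1/2:ℝ)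
        ≤ (tail^(2:ℝ)) ^ (1/2:ℝ) :=
          ENNReal.rpow_le_rpow (le_of_lt (lt_of_le_of_lt h1 hk)) (by norm_num)
      _ = tail := rpow_sq_half _
  have hT2 : (∫⁻ x in s, ENNReal.ofReal ((f k (x+h) - f k x)^2)) ^ (1/2:ℝ)
      ≤ C * ENNReal.ofReal ‖h‖ := by
    set u : EuclideanSpace ℝ (Fin n) → ℝ := fun y => f k y - f N y with hu
    have hucd : ContDiffOn ℝ 1 u Ω := (hf1 k).sub (hf1 N)
    have hucont : ContinuousOn u Ω := hucd.continuousOn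
    have huh_ae : AEMeasurable (fun x => u (x+h) - u x) (volume.restrict s) :=
      ((hfkh_ae k).sub (hfkh_ae N)).sub ((hfk_ae k).sub (hfk_ae N))
    have hvh_ae : AEMeasurable (fun x => f N (x+h) - f N x) (volume.restrict s) :=
      (hfkh_ae N).sub (hfk_ae N)
    have hsplit : ∀ x : EuclideanSpace ℝ (Fin n),
        f k (x+h) - f k x = (u (x+h) - u x) + (f N (x+h) - f N x) := by
      intro x; simp only [hu]; ring
    have hTu : (∫⁻ x in s, ENNReal.ofReal ((u (x+h) - u x)^2)) ^ (1/2:ℝ)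
        ≤ ENNReal.ofReal ‖h‖ := by
      have hDer : ∀ x ∈ Metric.ball x₀ r,
          fderiv ℝ u x = fderiv ℝ (f k) x - fderiv ℝ (f N) x := by
        intro x hx
        have hxΩ : Ω ∈ nhds x := hΩopen.mem_nhds (hrΩ hx)
        exact fderiv_fun_sub (((hf1 k).differentiableOn one_ne_zero).differentiableAt hxΩ)
          (((hf1 N).differentiableOn one_ne_zero).differentiableAt hxΩ)
      have h1 := trans_est hΩopen hucd hball h hρh
      have h2 : (∫⁻ x in Metric.ball x₀ r, ENNReal.ofReal (‖fderiv ℝ u x‖^2)) ≤ 1 := by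
        calc (∫⁻ x in Metric.ball x₀ r, ENNReal.ofReal (‖fderiv ℝ u x‖^2))
            = ∫⁻ x in Metric.ball x₀ r,
                ENNReal.ofReal (‖fderiv ℝ (f k) x - fderiv ℝ (f N) x‖^2) := by
              apply setLIntegral_congr_fun measurableSet_ball
              exact (fun x hx => by rw [hDer x hx])
          _ ≤ ∫⁻ p in Ω, ENNReal.ofReal (‖fderiv ℝ (f k) p - fderiv ℝ (f N) p‖^2) :=
              lintegral_mono' (Measure.restrict_mono hrΩ le_rfl) le_rfl
          _ ≤ ENNReal.ofReal 1 := le_of_lt (hN k hkN N le_rfl)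
          _ = 1 := ENNReal.ofReal_one
      calc (∫⁻ x in s, ENNReal.ofReal ((u (x+h) - u x)^2)) ^ (1/2:ℝ)
          ≤ (ENNReal.ofReal (‖h‖^2) * 1) ^ (1/2:ℝ) :=
            ENNReal.rpow_le_rpow (h1.trans (mul_le_mul_right h2 _)) (by norm_num)
        _ = ENNReal.ofReal ‖h‖ := by rw [mul_one, hnorm, rpow_sq_half]
    have hTv : (∫⁻ x in s, ENNReal.ofReal ((f N (x+h) - f N x)^2)) ^ (1/2:ℝ)
        ≤ ENNReal.ofReal ‖h‖ * M ^ (1/2:ℝ) := by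
      have h1 := trans_est hΩopen (hf1 N) hball h hρh
      calc (∫⁻ x in s, ENNReal.ofReal ((f N (x+h) - f N x)^2)) ^ (1/2:ℝ)
          ≤ (ENNReal.ofReal (‖h‖^2) * M) ^ (1/2:ℝ) :=
            ENNReal.rpow_le_rpow h1 (by norm_num)
        _ = ENNReal.ofReal ‖h‖ * M ^ (1/2:ℝ) := by
            rw [ENNReal.mul_rpow_of_nonneg _ _ (by norm_num), hnorm, rpow_sq_half]
    calc (∫⁻ x in s, ENNReal.ofReal ((f k (x+h) - f k x)^2)) ^ (1/2:ℝ)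
        = (∫⁻ x in s, ENNReal.ofReal
            (((u (x+h) - u x) + (f N (x+h) - f N x))^2)) ^ (1/2:ℝ) := by
          congr 1; apply lintegral_congr; intro x; rw [← hsplit x]
      _ ≤ (∫⁻ x in s, ENNReal.ofReal ((u (x+h) - u x)^2)) ^ (1/2:ℝ)
          + (∫⁻ x in s, ENNReal.ofReal ((f N (x+h) - f N x)^2)) ^ (1/2:ℝ) :=
          tri huh_ae hvh_ae
      _ ≤ ENNReal.ofReal ‖h‖ + ENNReal.ofReal ‖h‖ * M ^ (1/2:ℝ) := add_le_add hTu hTv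
      _ = C * ENNReal.ofReal ‖h‖ := by rw [hC]; ring
  -- combine the three pieces
  have hsplit3 : ∀ x : EuclideanSpace ℝ (Fin n),
      g (x+h) - g x = (g (x+h) - f k (x+h)) + ((f k (x+h) - f k x) + (f k x - g x)) := by
    intro x; ring
  calc (∫⁻ x in s, ENNReal.ofReal ((g (x+h) - g x)^2)) ^ (1/2:ℝ)
      = (∫⁻ x in s, ENNReal.ofReal (((g (x+h) - f k (x+h))
          + ((f k (x+h) - f k x) + (f k x - g x)))^2)) ^ (1/2:ℝ) := by
        congr 1; apply lintegral_congr; intro x; rw [← hsplit3 x]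
    _ ≤ (∫⁻ x in s, ENNReal.ofReal ((g (x+h) - f k (x+h))^2)) ^ (1/2:ℝ)
        + (∫⁻ x in s, ENNReal.ofReal
            (((f k (x+h) - f k x) + (f k x - g x))^2)) ^ (1/2:ℝ) :=
        tri (hgh_ae.sub (hfkh_ae k))
          (((hfkh_ae k).sub (hfk_ae k)).add ((hfk_ae k).sub hg_ae))
    _ ≤ tail + ((∫⁻ x in s, ENNReal.ofReal ((f k (x+h) - f k x)^2)) ^ (1/2:ℝ)
        + (∫⁻ x in s, ENNReal.ofReal ((f k x - g x)^2)) ^ (1/2:ℝ)) :=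
        add_le_add hT1 (tri ((hfkh_ae k).sub (hfk_ae k)) ((hfk_ae k).sub hg_ae))
    _ ≤ tail + (C * ENNReal.ofReal ‖h‖ + tail) := add_le_add le_rfl (add_le_add hT2 hT3)
    _ = C * ENNReal.ofReal ‖h‖ + (tail + tail) := by ring
    _ = C * ENNReal.ofReal ‖h‖ + δ := by rw [htaildef, ENNReal.add_halves]

end NoStepAux6
namespace NoStepAux7
open NoStepAux NoStepAux2 NoStepAux3 NoStepAux4 NoStepAux5 NoStepAux6
variable {n : ℕ}

/-- From the quadratic translation bound, the symmetric difference of `D` under small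
translations is null near `x₀`. -/
lemma chain_zero {D : Set (EuclideanSpace ℝ (Fin n))} (hDmeas : MeasurableSet D)
    {a b : ℝ} (hab : a ≠ b) {x₀ : EuclideanSpace ℝ (Fin n)} {r : ℝ} (hr : 0 < r)
    {C : ℝ≥0∞} (hCfin : C ≠ ⊤)
    (hST : ∀ (ρ : ℝ) (h : EuclideanSpace ℝ (Fin n)), ρ + ‖h‖ ≤ r →
      (∫⁻ x in Metric.ball x₀ ρ, ENNReal.ofReal
          (((if x + h ∈ D then a else b) - (if x ∈ D then a else b))^2)) ^ (1/2:ℝ)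
        ≤ C * ENNReal.ofReal ‖h‖) :
    ∀ h : EuclideanSpace ℝ (Fin n), ‖h‖ ≤ r/4 →
      volume ({x | ¬ ((x ∈ D) ↔ (x + h ∈ D))} ∩ Metric.ball x₀ (r/4)) = 0 := by
  classical
  set q := ENNReal.ofReal ((a-b)^2) with hq
  have habs : (0:ℝ) < (a-b)^2 := by
    have := sub_ne_zero.mpr hab; positivity
  have hq0 : q ≠ 0 := (ENNReal.ofReal_pos.mpr habs).ne'
  have hqfin : q ≠ ⊤ := ENNReal.ofReal_ne_top
  have hΦ : ∀ (ρ : ℝ) (h : EuclideanSpace ℝ (Fin n)), ρ + ‖h‖ ≤ r →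
      q * volume ({x | ¬ ((x ∈ D) ↔ (x + h ∈ D))} ∩ Metric.ball x₀ ρ)
        ≤ C ^ (2:ℝ) * ENNReal.ofReal (‖h‖^2) := by
    intro ρ h hρh
    have h2 := ENNReal.rpow_le_rpow (hST ρ h hρh) (by norm_num : (0:ℝ) ≤ 2)
    rw [rpow_half_sq, lint_step hDmeas a b h measurableSet_ball] at h2
    calc q * volume ({x | ¬ ((x ∈ D) ↔ (x + h ∈ D))} ∩ Metric.ball x₀ ρ)
        ≤ (C * ENNReal.ofReal ‖h‖) ^ (2:ℝ) := h2
      _ = C ^ (2:ℝ) * ENNReal.ofReal (‖h‖^2) := by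
          rw [ENNReal.mul_rpow_of_nonneg _ _ (by norm_num : (0:ℝ) ≤ 2)]
          congr 1
          rw [ofReal_sq ‖h‖, abs_norm]
  intro h hh
  set v := volume ({x | ¬ ((x ∈ D) ↔ (x + h ∈ D))} ∩ Metric.ball x₀ (r/4)) with hv
  set B := C ^ (2:ℝ) * ENNReal.ofReal (‖h‖^2) with hB
  have hBfin : B ≠ ⊤ :=
    ENNReal.mul_ne_top (ENNReal.rpow_ne_top_of_nonneg (by norm_num) hCfin)
      ENNReal.ofReal_ne_top
  have key : ∀ m : ℕ, 0 < m → (m:ℝ≥0∞) * (q * v) ≤ B := by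
    intro m hm
    set h' := (m:ℝ)⁻¹ • h with hh'def
    have hmne : (m:ℝ) ≠ 0 := Nat.cast_ne_zero.mpr hm.ne'
    have hmnn : (0:ℝ) ≤ (m:ℝ) := Nat.cast_nonneg m
    have hh'norm : ‖h'‖ = ‖h‖ / m := by
      rw [hh'def, norm_smul, Real.norm_eq_abs, abs_inv, Nat.abs_cast, inv_mul_eq_div]
    have hh'le : ‖h'‖ ≤ ‖h‖ := by
      rw [hh'norm]
      apply div_le_self (norm_nonneg h)
      exact_mod_cast hm
    have hsmul : (m:ℝ) • h' = h := by rw [hh'def, smul_smul]; field_simp; exact one_smul _ _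
    set S := {x : EuclideanSpace ℝ (Fin n) | ¬ ((x ∈ D) ↔ (x + h' ∈ D))}
      ∩ Metric.ball x₀ (r/2) with hS
    have hSm : MeasurableSet S := (measurable_T hDmeas h').inter measurableSet_ball
    have hcover : {x | ¬ ((x ∈ D) ↔ (x + h ∈ D))} ∩ Metric.ball x₀ (r/4)
        ⊆ ⋃ i ∈ Finset.range m, (fun x => x + (i:ℝ) • h') ⁻¹' S := by
      rintro x ⟨hxT, hxb⟩
      have hxT' : ¬ ((x ∈ D) ↔ (x + (m:ℝ) • h' ∈ D)) := by rwa [hsmul]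
      obtain ⟨i, him, hi⟩ := pigeon hm hxT'
      refine mem_biUnion (Finset.mem_range.mpr him) ?_
      refine ⟨hi, ?_⟩
      have hi_le : (i:ℝ) ≤ m := by exact_mod_cast him.le
      have hnsm : ‖(i:ℝ) • h'‖ ≤ ‖h‖ := by
        rw [norm_smul, Real.norm_eq_abs, abs_of_nonneg (Nat.cast_nonneg i), hh'norm]
        calc (i:ℝ) * (‖h‖ / m) ≤ (m:ℝ) * (‖h‖ / m) := by
              apply mul_le_mul_of_nonneg_right hi_le
              positivity
          _ = ‖h‖ := by field_simp
      rw [Metric.mem_ball] at hxb ⊢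
      calc dist (x + (i:ℝ) • h') x₀ ≤ dist (x + (i:ℝ) • h') x + dist x x₀ :=
            dist_triangle _ _ _
        _ < ‖h‖ + r/4 := by
            apply add_lt_add_of_le_of_lt _ hxb
            rw [dist_eq_norm]
            have : x + (i:ℝ) • h' - x = (i:ℝ) • h' := by abel
            rw [this]
            exact hnsm
        _ ≤ r/2 := by linarith
    have hvle : v ≤ (m:ℝ≥0∞) * volume S := by
      calc v ≤ volume (⋃ i ∈ Finset.range m, (fun x => x + (i:ℝ) • h') ⁻¹' S) :=
            measure_mono hcover
        _ ≤ ∑ i ∈ Finset.range m, volume ((fun x => x + (i:ℝ) • h') ⁻¹' S) :=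
            measure_biUnion_finset_le _ _
        _ = ∑ _i ∈ Finset.range m, volume S := by
            apply Finset.sum_congr rfl
            intro i _
            exact (measurePreserving_add_right volume ((i:ℝ) • h')).measure_preimage
              hSm.nullMeasurableSet
        _ = (m:ℝ≥0∞) * volume S := by
            rw [Finset.sum_const, Finset.card_range, nsmul_eq_mul]
    have hΦ' : q * volume S ≤ C ^ (2:ℝ) * ENNReal.ofReal (‖h'‖^2) := by
      apply hΦ (r/2) h'
      have : ‖h'‖ ≤ r/4 := hh'le.trans hh
      linarith
    have hmm : (m:ℝ≥0∞) * ((m:ℝ≥0∞) * ENNReal.ofReal (‖h'‖^2)) = ENNReal.ofReal (‖h‖^2) := by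
      rw [← ENNReal.ofReal_natCast m, ← ENNReal.ofReal_mul hmnn, ← ENNReal.ofReal_mul hmnn]
      congr 1
      rw [hh'norm]
      field_simp
    calc (m:ℝ≥0∞) * (q * v) ≤ (m:ℝ≥0∞) * (q * ((m:ℝ≥0∞) * volume S)) := by
          gcongr
      _ = (m:ℝ≥0∞) * ((m:ℝ≥0∞) * (q * volume S)) := by ring
      _ ≤ (m:ℝ≥0∞) * ((m:ℝ≥0∞) * (C ^ (2:ℝ) * ENNReal.ofReal (‖h'‖^2))) := by gcongr
      _ = C ^ (2:ℝ) * ((m:ℝ≥0∞) * ((m:ℝ≥0∞) * ENNReal.ofReal (‖h'‖^2))) := by ring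
      _ = B := by rw [hmm]
  -- conclude v = 0
  by_contra hv0
  have hvfin : v ≠ ⊤ :=
    ne_top_of_le_ne_top measure_ball_lt_top.ne (measure_mono inter_subset_right)
  have hqv0 : q * v ≠ 0 := mul_ne_zero hq0 hv0
  have hqvfin : q * v ≠ ⊤ := ENNReal.mul_ne_top hqfin hvfin
  obtain ⟨m, hm⟩ := ENNReal.exists_nat_gt (ENNReal.div_lt_top hBfin hqv0).ne
  have hm0 : 0 < m := by
    rcases Nat.eq_zero_or_pos m with h0 | h0
    · exfalso
      rw [h0] at hm
      exact absurd hm (by simp)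
    · exact h0
  rw [ENNReal.div_lt_iff (Or.inl hqv0) (Or.inl hqvfin)] at hm
  exact absurd (key m hm0) (not_le.mpr hm)

end NoStepAux7
namespace NoStepAux8
open NoStepAux NoStepAux2 NoStepAux3 NoStepAux4 NoStepAux5 NoStepAux6 NoStepAux7
variable {n : ℕ}

lemma fubini_onesided {D : Set (EuclideanSpace ℝ (Fin n))} (hDmeas : MeasurableSet D)
    {x₀ : EuclideanSpace ℝ (Fin n)} {r : ℝ} (hr : 0 < r)
    (hzero : ∀ h : EuclideanSpace ℝ (Fin n), ‖h‖ ≤ r/4 →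
      volume ({x | ¬ ((x ∈ D) ↔ (x + h ∈ D))} ∩ Metric.ball x₀ (r/4)) = 0) :
    volume (D ∩ Metric.ball x₀ (r/16)) = 0 ∨ volume (Metric.ball x₀ (r/16) \ D) = 0 := by
  classical
  set B₁₆ := Metric.ball x₀ (r/16) with hB₁₆
  set F : EuclideanSpace ℝ (Fin n) → EuclideanSpace ℝ (Fin n) → ℝ≥0∞ :=
    fun x h => if (x ∈ D) ↔ (x + h ∈ D) then 0 else 1 with hF
  have hW : MeasurableSet {p : EuclideanSpace ℝ (Fin n) × EuclideanSpace ℝ (Fin n) |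
      ¬ ((p.1 ∈ D) ↔ (p.1 + p.2 ∈ D))} := by
    have hadd : Measurable (fun p : EuclideanSpace ℝ (Fin n) × EuclideanSpace ℝ (Fin n) =>
      p.1 + p.2) := measurable_fst.add measurable_snd
    have : {p : EuclideanSpace ℝ (Fin n) × EuclideanSpace ℝ (Fin n) |
        ¬ ((p.1 ∈ D) ↔ (p.1 + p.2 ∈ D))}
        = ((Prod.fst ⁻¹' D) ∩ ((fun p : EuclideanSpace ℝ (Fin n) × EuclideanSpace ℝ (Fin n) =>
            p.1 + p.2) ⁻¹' D)ᶜ)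
          ∪ ((Prod.fst ⁻¹' D)ᶜ ∩ ((fun p : EuclideanSpace ℝ (Fin n) ×
            EuclideanSpace ℝ (Fin n) => p.1 + p.2) ⁻¹' D)) := by
      ext p; by_cases h1 : p.1 ∈ D <;> by_cases h2 : p.1 + p.2 ∈ D <;> simp [h1, h2]
    rw [this]
    exact ((measurable_fst hDmeas).inter (hadd hDmeas).compl).union
      ((measurable_fst hDmeas).compl.inter (hadd hDmeas))
  have hFm : Measurable (Function.uncurry F) := by
    have : Function.uncurry F = ({p : EuclideanSpace ℝ (Fin n) × EuclideanSpace ℝ (Fin n) |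
        ¬ ((p.1 ∈ D) ↔ (p.1 + p.2 ∈ D))}).indicator (fun _ => 1) := by
      funext p
      by_cases hp : (p.1 ∈ D) ↔ (p.1 + p.2 ∈ D) <;>
        simp [Function.uncurry, hF, Set.indicator, hp]
    rw [this]
    exact measurable_const.indicator hW
  set J := ∫⁻ x in B₁₆, ∫⁻ h in Metric.closedBall (0:EuclideanSpace ℝ (Fin n)) (r/4), F x h
    with hJdef
  -- J = 0 by Fubini and hzero
  have hJ0 : J = 0 := by
    rw [hJdef, lintegral_lintegral_swap hFm.aemeasurable]
    apply le_antisymm _ zero_le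
    have : ∀ h ∈ Metric.closedBall (0:EuclideanSpace ℝ (Fin n)) (r/4),
        (∫⁻ x in B₁₆, F x h) = 0 := by
      intro h hh
      apply le_antisymm _ zero_le
      have hhn : ‖h‖ ≤ r/4 := by rwa [Metric.mem_closedBall, dist_zero_right] at hh
      have heq : ∀ x, F x h = ({x | ¬ ((x ∈ D) ↔ (x + h ∈ D))}).indicator
          (fun _ => (1:ℝ≥0∞)) x := by
        intro x
        by_cases hp : (x ∈ D) ↔ (x + h ∈ D) <;> simp [hF, Set.indicator, hp]
      calc (∫⁻ x in B₁₆, F x h)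
          = ∫⁻ x in B₁₆, ({x | ¬ ((x ∈ D) ↔ (x + h ∈ D))}).indicator (fun _ => 1) x :=
            lintegral_congr heq
        _ = volume ({x | ¬ ((x ∈ D) ↔ (x + h ∈ D))} ∩ B₁₆) := by
            rw [lintegral_indicator (measurable_T hDmeas h), setLIntegral_const,
              Measure.restrict_apply (measurable_T hDmeas h), one_mul]
        _ ≤ volume ({x | ¬ ((x ∈ D) ↔ (x + h ∈ D))} ∩ Metric.ball x₀ (r/4)) := by
            apply measure_mono
            apply inter_subset_inter_right
            exact Metric.ball_subset_ball (by linarith)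
        _ = 0 := hzero h hhn
    exact le_of_eq ((setLIntegral_congr_fun measurableSet_closedBall
      this).trans lintegral_zero)
  -- lower bound for the inner integral
  have hinner : ∀ x ∈ B₁₆, x ∈ D →
      volume (B₁₆ \ D) ≤ ∫⁻ h in Metric.closedBall (0:EuclideanSpace ℝ (Fin n)) (r/4), F x h := by
    intro x hx hxD
    set S' := (fun h => x + h) ⁻¹' (B₁₆ \ D) with hS'
    have hS'm : MeasurableSet S' :=
      (measurableSet_ball.diff hDmeas).preimage (measurable_const.add measurable_id)
    have hS'sub : S' ⊆ Metric.closedBall (0:EuclideanSpace ℝ (Fin n)) (r/4) := by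
      intro h hh
      rw [Metric.mem_closedBall, dist_zero_right]
      have h1 : x + h ∈ B₁₆ := (mem_preimage.mp hh).1
      rw [hB₁₆, Metric.mem_ball] at h1 hx
      have : ‖h‖ = dist (x + h) x := by rw [dist_eq_norm]; congr 1; abel
      rw [this]
      calc dist (x + h) x ≤ dist (x + h) x₀ + dist x₀ x := dist_triangle _ _ _
        _ ≤ r/16 + r/16 := by
            rw [dist_comm x₀ x]; exact add_le_add h1.le hx.le
        _ ≤ r/4 := by linarith
    calc volume (B₁₆ \ D) = volume S' :=
          ((measurePreserving_add_left volume x).measure_preimage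
            ((measurableSet_ball.diff hDmeas)).nullMeasurableSet).symm
      _ = volume (S' ∩ Metric.closedBall 0 (r/4)) := by
          rw [inter_eq_self_of_subset_left hS'sub]
      _ = ∫⁻ h in Metric.closedBall (0:EuclideanSpace ℝ (Fin n)) (r/4),
            S'.indicator (fun _ => 1) h := by
          rw [lintegral_indicator hS'm, setLIntegral_const,
            Measure.restrict_apply hS'm, one_mul]
      _ ≤ ∫⁻ h in Metric.closedBall (0:EuclideanSpace ℝ (Fin n)) (r/4), F x h := by
          apply lintegral_mono
          intro h
          by_cases hhS : h ∈ S'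
          · rw [Set.indicator_of_mem hhS]
            have hno : ¬ ((x ∈ D) ↔ (x + h ∈ D)) := by
              intro hiff
              exact (mem_preimage.mp hhS).2 (hiff.mp hxD)
            simp [hF, hno]
          · rw [Set.indicator_of_notMem hhS]; exact zero_le
  -- conclude
  have hlow : volume (B₁₆ \ D) * volume (B₁₆ ∩ D) ≤ J := by
    have hBD : (B₁₆ ∩ D) ∩ B₁₆ = B₁₆ ∩ D := by
      rw [inter_comm, ← inter_assoc, inter_self]
    calc volume (B₁₆ \ D) * volume (B₁₆ ∩ D)
        = ∫⁻ x in B₁₆, (B₁₆ ∩ D).indicator (fun _ => volume (B₁₆ \ D)) x := by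
          rw [lintegral_indicator (measurableSet_ball.inter hDmeas), setLIntegral_const,
            Measure.restrict_apply (measurableSet_ball.inter hDmeas), hBD]
      _ ≤ J := by
          rw [hJdef]
          apply lintegral_mono_ae
          refine (ae_restrict_iff' measurableSet_ball).mpr (ae_of_all _ ?_)
          intro x hx
          by_cases hxD : x ∈ B₁₆ ∩ D
          · rw [Set.indicator_of_mem hxD]
            exact hinner x hx hxD.2
          · rw [Set.indicator_of_notMem hxD]; exact zero_le
  rw [hJ0] at hlow
  have := le_antisymm hlow zero_le
  rcases mul_eq_zero.mp this with h1 | h2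
  · right; rwa [hB₁₆]
  · left; rwa [inter_comm] at h2

end NoStepAux8

/-- Corollary 3.1, Euclidean formulation: a two-valued step function on a nonempty connected
open set `Ω ⊆ ℝⁿ`, taking distinct values `a` on `D` and `b` on `Ω \ D` with both pieces of
positive Lebesgue measure, is not in `W^{1,2}(Ω)`: there is no sequence of `C¹` functions on
`Ω` converging to it in `L²(Ω)` whose gradients are Cauchy in `L²(Ω)`. -/
theorem no_step_function_in_W12 (n : ℕ)
    (Ω : Set (EuclideanSpace ℝ (Fin n))) (hΩopen : IsOpen Ω) (hΩconn : IsConnected Ω)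
    (D : Set (EuclideanSpace ℝ (Fin n))) (hDmeas : MeasurableSet D) (hDΩ : D ⊆ Ω)
    (hDpos : 0 < volume D) (hDcpos : 0 < volume (Ω \ D))
    (a b : ℝ) (hab : a ≠ b) :
    ¬ ∃ f : ℕ → EuclideanSpace ℝ (Fin n) → ℝ,
      (∀ k, ContDiffOn ℝ 1 (f k) Ω) ∧
      Tendsto (fun k =>
          ∫⁻ p in Ω, ENNReal.ofReal ((f k p - (if p ∈ D then a else b)) ^ 2))
        atTop (nhds 0) ∧
      (∀ ε > (0:ℝ), ∃ N, ∀ k ≥ N, ∀ j ≥ N,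
        (∫⁻ p in Ω, ENNReal.ofReal (‖fderiv ℝ (f k) p - fderiv ℝ (f j) p‖ ^ 2))
          < ENNReal.ofReal ε) := by
  rintro ⟨f, hf1, hf2, hf3⟩
  -- local one-sidedness from the previous lemmas
  have hloc : ∀ x₀ : EuclideanSpace ℝ (Fin n), ∀ r : ℝ, 0 < r →
      Metric.closedBall x₀ r ⊆ Ω →
      volume (D ∩ Metric.ball x₀ (r/16)) = 0 ∨ volume (Metric.ball x₀ (r/16) \ D) = 0 := by
    intro x₀ r hr hball
    obtain ⟨C, hCfin, hST⟩ := NoStepAux6.key_ST hΩopen hDmeas hf1 hf2 hf3 x₀ r hball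
    exact NoStepAux8.fubini_onesided hDmeas hr
      (NoStepAux7.chain_zero hDmeas hab hr hCfin hST)
  set U := {x : EuclideanSpace ℝ (Fin n) | ∃ ε > 0, volume (Metric.ball x ε \ D) = 0}
    with hU
  set V := {x : EuclideanSpace ℝ (Fin n) | ∃ ε > 0, volume (Metric.ball x ε ∩ D) = 0}
    with hV
  have hUopen : IsOpen U := by
    rw [Metric.isOpen_iff]
    rintro x ⟨ε, hε, hεn⟩
    refine ⟨ε/2, by linarith, ?_⟩
    intro y hy
    refine ⟨ε/2, by linarith, ?_⟩
    apply measure_mono_null (diff_subset_diff_left (Metric.ball_subset_ball' ?_)) hεn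
    rw [Metric.mem_ball] at hy
    linarith [hy.le]
  have hVopen : IsOpen V := by
    rw [Metric.isOpen_iff]
    rintro x ⟨ε, hε, hεn⟩
    refine ⟨ε/2, by linarith, ?_⟩
    intro y hy
    refine ⟨ε/2, by linarith, ?_⟩
    apply measure_mono_null (inter_subset_inter_left _ (Metric.ball_subset_ball' ?_)) hεn
    rw [Metric.mem_ball] at hy
    linarith [hy.le]
  have hcover : Ω ⊆ U ∪ V := by
    intro x hx
    obtain ⟨ε, hε0, hεΩ⟩ := Metric.isOpen_iff.mp hΩopen x hx
    have hcb : Metric.closedBall x (ε/2) ⊆ Ω :=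
      (Metric.closedBall_subset_ball (by linarith)).trans hεΩ
    rcases hloc x (ε/2) (by linarith) hcb with h1 | h2
    · right
      exact ⟨ε/2/16, by positivity, by rwa [inter_comm] at h1⟩
    · left
      exact ⟨ε/2/16, by positivity, h2⟩
  have hdisj : Ω ∩ (U ∩ V) = ∅ := by
    ext x
    simp only [mem_inter_iff, mem_empty_iff_false, iff_false]
    rintro ⟨hxΩ, ⟨ε₁, hε₁, h1⟩, ⟨ε₂, hε₂, h2⟩⟩
    have hsub : Metric.ball x (min ε₁ ε₂)
        ⊆ (Metric.ball x ε₁ \ D) ∪ (Metric.ball x ε₂ ∩ D) := by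
      intro y hy
      by_cases hyD : y ∈ D
      · right; exact ⟨Metric.ball_subset_ball (min_le_right _ _) hy, hyD⟩
      · left; exact ⟨Metric.ball_subset_ball (min_le_left _ _) hy, hyD⟩
    have hb : volume (Metric.ball x (min ε₁ ε₂)) = 0 :=
      measure_mono_null hsub (measure_union_null h1 h2)
    exact absurd hb (Metric.measure_ball_pos volume x (lt_min hε₁ hε₂)).ne'
  rcases isPreconnected_iff_subset_of_disjoint.mp hΩconn.isPreconnected U V
      hUopen hVopen hcover hdisj with hΩU | hΩV
  · -- Ω ⊆ U : then Ω \ D is null, contradiction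
    have hx' : ∀ x ∈ Ω, ∃ ε > 0, volume (Metric.ball x ε \ D) = 0 := fun x hx => hΩU hx
    choose! ε hε hnull using hx'
    obtain ⟨T, hTc, hTeq⟩ := TopologicalSpace.isOpen_iUnion_countable
      (fun i : {x // x ∈ Ω} => Metric.ball (i : EuclideanSpace ℝ (Fin n)) (ε i))
      (fun i => Metric.isOpen_ball)
    have hzero : volume (Ω \ D) = 0 := by
      apply measure_mono_null (t := ⋃ i ∈ T,
        (Metric.ball (i : EuclideanSpace ℝ (Fin n)) (ε i) \ D))
      · rintro y ⟨hyΩ, hyD⟩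
        have hy : y ∈ ⋃ i : {x // x ∈ Ω}, Metric.ball (i : EuclideanSpace ℝ (Fin n)) (ε i) :=
          mem_iUnion.mpr ⟨⟨y, hyΩ⟩, Metric.mem_ball_self (hε y hyΩ)⟩
        rw [← hTeq] at hy
        obtain ⟨i, hiT, hyi⟩ := mem_iUnion₂.mp hy
        exact mem_iUnion₂.mpr ⟨i, hiT, hyi, hyD⟩
      · exact (measure_biUnion_null_iff hTc).mpr (fun i _ => hnull i i.2)
    exact absurd hzero hDcpos.ne'
  · -- Ω ⊆ V : then D is null, contradiction
    have hx' : ∀ x ∈ Ω, ∃ ε > 0, volume (Metric.ball x ε ∩ D) = 0 := fun x hx => hΩV hx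
    choose! ε hε hnull using hx'
    obtain ⟨T, hTc, hTeq⟩ := TopologicalSpace.isOpen_iUnion_countable
      (fun i : {x // x ∈ Ω} => Metric.ball (i : EuclideanSpace ℝ (Fin n)) (ε i))
      (fun i => Metric.isOpen_ball)
    have hzero : volume D = 0 := by
      apply measure_mono_null (t := ⋃ i ∈ T,
        (Metric.ball (i : EuclideanSpace ℝ (Fin n)) (ε i) ∩ D))
      · intro y hyD
        have hyΩ : y ∈ Ω := hDΩ hyD
        have hy : y ∈ ⋃ i : {x // x ∈ Ω}, Metric.ball (i : EuclideanSpace ℝ (Fin n)) (ε i) :=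
          mem_iUnion.mpr ⟨⟨y, hyΩ⟩, Metric.mem_ball_self (hε y hyΩ)⟩
        rw [← hTeq] at hy
        obtain ⟨i, hiT, hyi⟩ := mem_iUnion₂.mp hy
        exact mem_iUnion₂.mpr ⟨i, hiT, hyi, hyD⟩
      · exact (measure_biUnion_null_iff hTc).mpr (fun i _ => hnull i i.2)
    exact absurd hzero hDpos.ne'
end
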